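/- arXiv:0805.1618 — 6 statements merged into one kernel-verified Lean document; each statement's English description precedes it below -/
import Mathlib

section
/- Suppose E_{(λ_0,…,λ_n)} and E_{(λ_0,…,λ_{n−1})} are extended Chebyshev systems for {a,b}, a ≠ b ∈ ℝ, and let d_k := lim_{x↑b} (d/dx p_{(λ_0,…,λ_n),k}(x)) / p_{(λ_0,…,λ_{n−1}),k}(x) for k = 0,…,n−1 (these limits exist and are nonzero). Then e^{(x−a)λ_n} = p_{(λ_0,…,λ_n),0}(x) + Σ_{k=1}^{n} (−1)^k d_0⋯d_{k−1} · p_{(λ_0,…,λ_n),k}(x) for all x, and for each k = 1,…,n−1 one has d_0⋯d_{k−1} = (−1)^n e^{(b−a)λ_n} / (p_{(λ_0,…,λ_n),n}(b) · d_k⋯d_{n−1}). -/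
open Filter Topology Set

noncomputable section

/-- The differential operator `(d/dx − λ₀)⋯(d/dx − λₙ)` applied to `f`,
where `λ₀,…,λₙ` are the entries of the list. -/
def LOp : List ℂ → (ℝ → ℂ) → (ℝ → ℂ)
  | [], f => f
  | c :: r, f => LOp r (fun x => deriv f x - c * f x)

/-- The space `E_Λ` of exponential polynomials with eigenvalue vector `l`. -/
def ExpPoly (l : List ℂ) : Set (ℝ → ℂ) :=
  {f | ContDiff ℝ (⊤ : ℕ∞) f ∧ LOp l f = 0}

/-- `f` has a zero of order (multiplicity) exactly `k` at `x₀`. -/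
def HasZeroOfOrder (f : ℝ → ℂ) (x₀ : ℝ) (k : ℕ) : Prop :=
  (∀ j < k, iteratedDeriv j f x₀ = 0) ∧ iteratedDeriv k f x₀ ≠ 0

/-- `E_l` (with `l.length = n + 1`) is an extended Chebyshev system for `A ⊆ ℝ`:
every nonzero member has at most `n` zeros in `A`, counted with multiplicity. -/
def IsExtChebyshev (l : List ℂ) (A : Set ℝ) : Prop :=
  ∀ f ∈ ExpPoly l, f ≠ 0 → ∀ (s : Finset ℝ) (m : ℝ → ℕ),
    (↑s : Set ℝ) ⊆ A → (∀ x ∈ s, ∀ j < m x, iteratedDeriv j f x = 0) →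
    ∑ x ∈ s, m x ≤ l.length - 1

/-- `p k`, `k = 0,…,n` (with `l.length = n + 1`) is the normalized Bernstein basis of
`E_l` for the points `a ≠ b`: `p k` lies in `E_l`, has a zero of order exactly `k`
at `a`, a zero of order exactly `n − k` at `b`, and `(p k)^{(k)}(a) = 1`. -/
def IsBernsteinBasis (l : List ℂ) (a b : ℝ) (p : ℕ → ℝ → ℂ) : Prop :=
  ∀ k ≤ l.length - 1,
    p k ∈ ExpPoly l ∧ HasZeroOfOrder (p k) a k ∧
      HasZeroOfOrder (p k) b (l.length - 1 - k) ∧ iteratedDeriv k (p k) a = 1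

/-- `E_l` is closed under (pointwise) complex conjugation. -/
def ConjClosed (l : List ℂ) : Prop :=
  ∀ f ∈ ExpPoly l, (fun x => starRingEnd ℂ (f x)) ∈ ExpPoly l

/-! ### Auxiliary lemmas -/

abbrev Dop (c : ℂ) (f : ℝ → ℂ) : ℝ → ℂ := fun x => deriv f x - c * f x

lemma Dop.contDiff {f : ℝ → ℂ} (hf : ContDiff ℝ (⊤:ℕ∞) f) (c : ℂ) :
    ContDiff ℝ (⊤:ℕ∞) (Dop c f) :=
  (contDiff_infty_iff_deriv.mp hf).2.sub (contDiff_const.mul hf)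

lemma Dop.comm {f : ℝ → ℂ} (hf : ContDiff ℝ (⊤:ℕ∞) f) (c c' : ℂ) :
    Dop c (Dop c' f) = Dop c' (Dop c f) := by
  have hdf : Differentiable ℝ f := hf.differentiable (by simp)
  have hdf' : Differentiable ℝ (deriv f) :=
    ((contDiff_infty_iff_deriv.mp hf).2).differentiable (by simp)
  funext x
  simp only [Dop]
  rw [deriv_fun_sub (hdf'.differentiableAt) ((hdf.differentiableAt).const_mul c'),
      deriv_fun_sub (hdf'.differentiableAt) ((hdf.differentiableAt).const_mul c),
      deriv_const_mul c' (hdf.differentiableAt), deriv_const_mul c (hdf.differentiableAt)]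
  ring

lemma LOp_append_singleton (c : ℂ) : ∀ (l : List ℂ) (f : ℝ → ℂ), ContDiff ℝ (⊤:ℕ∞) f →
    LOp (l ++ [c]) f = LOp l (Dop c f)
  | [], f, _ => rfl
  | c' :: r, f, hf => by
    show LOp (r ++ [c]) (Dop c' f) = LOp r (Dop c' (Dop c f))
    rw [LOp_append_singleton c r (Dop c' f) (Dop.contDiff hf c'), Dop.comm hf]

lemma Dop.mem_ExpPoly {l : List ℂ} {c : ℂ} {f : ℝ → ℂ}
    (hf : f ∈ ExpPoly (l ++ [c])) : Dop c f ∈ ExpPoly l := by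
  obtain ⟨hs, hz⟩ := hf
  exact ⟨Dop.contDiff hs c, by rw [← LOp_append_singleton c l f hs]; exact hz⟩

lemma contDiff_nat_of_top {f : ℝ → ℂ} (hf : ContDiff ℝ (⊤:ℕ∞) f) (m : ℕ) :
    ContDiff ℝ (m : ℕ∞) f := hf.of_le (by exact_mod_cast le_top)

lemma iteratedDeriv_sub' {f g : ℝ → ℂ} (m : ℕ) (hf : ContDiff ℝ (⊤:ℕ∞) f)
    (hg : ContDiff ℝ (⊤:ℕ∞) g) (x : ℝ) :
    iteratedDeriv m (fun y => f y - g y) x = iteratedDeriv m f x - iteratedDeriv m g x := by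
  have := iteratedDerivWithin_sub (mem_univ x) uniqueDiffOn_univ
    ((contDiff_nat_of_top hf m).contDiffWithinAt (s := univ))
    ((contDiff_nat_of_top hg m).contDiffWithinAt (s := univ))
  simpa [iteratedDerivWithin_univ, Pi.sub_def] using this

lemma iteratedDeriv_cmul {f : ℝ → ℂ} (m : ℕ) (hf : ContDiff ℝ (⊤:ℕ∞) f) (c : ℂ) (x : ℝ) :
    iteratedDeriv m (fun y => c * f y) x = c * iteratedDeriv m f x := by
  have := iteratedDerivWithin_const_smul (F := ℂ) (R := ℂ) (mem_univ x) uniqueDiffOn_univ c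
    ((contDiff_nat_of_top hf m).contDiffWithinAt (s := univ))
  simpa [iteratedDerivWithin_univ, smul_eq_mul] using this

lemma iteratedDeriv_zero_fun (m : ℕ) (x : ℝ) :
    iteratedDeriv m (fun _ : ℝ => (0:ℂ)) x = 0 := by
  have := iteratedDeriv_cmul (f := fun _ : ℝ => (1:ℂ)) m contDiff_const 0 x
  simpa using this

lemma iteratedDeriv_Dop {f : ℝ → ℂ} (hf : ContDiff ℝ (⊤:ℕ∞) f) (c : ℂ) (m : ℕ) (x : ℝ) :
    iteratedDeriv m (Dop c f) x = iteratedDeriv (m + 1) f x - c * iteratedDeriv m f x := by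
  have h1 : ContDiff ℝ (⊤:ℕ∞) (deriv f) := (contDiff_infty_iff_deriv.mp hf).2
  rw [show Dop c f = (fun y => deriv f y - c * f y) from rfl,
    iteratedDeriv_sub' m h1 (contDiff_const.mul hf), iteratedDeriv_cmul m hf,
    iteratedDeriv_succ']

lemma cheb_eq_zero {l : List ℂ} {a b : ℝ} (hab : a ≠ b)
    (hcheb : IsExtChebyshev l {a, b}) {r : ℝ → ℂ} (hr : r ∈ ExpPoly l)
    {A B : ℕ} (hAB : l.length ≤ A + B) (hl : 1 ≤ l.length)
    (ha : ∀ j < A, iteratedDeriv j r a = 0) (hb : ∀ j < B, iteratedDeriv j r b = 0) :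
    r = 0 := by
  by_contra hr0
  have := hcheb r hr hr0 {a, b} (fun x => if x = a then A else B)
    (by intro x hx; simpa using hx)
    (by
      intro x hx j hj
      simp only [Finset.mem_insert, Finset.mem_singleton] at hx
      rcases hx with rfl | rfl
      · exact ha j (by simpa using hj)
      · simp only [if_neg (Ne.symm hab)] at hj; exact hb j hj)
  rw [Finset.sum_pair hab] at this
  rw [if_pos rfl, if_neg (Ne.symm hab)] at this
  omega

lemma tendsto_div_pow_real (b : ℝ) : ∀ (m : ℕ) (φ : ℝ → ℝ), ContDiff ℝ (⊤:ℕ∞) φ →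
    (∀ j < m, iteratedDeriv j φ b = 0) →
    Tendsto (fun x => φ x / (x - b)^m) (𝓝[<] b) (𝓝 (iteratedDeriv m φ b / m.factorial))
  | 0, φ, hφ, _ => by
    simpa using ((hφ.continuous.tendsto b).mono_left nhdsWithin_le_nhds)
  | (m+1), φ, hφ, h => by
    have hφ' : ContDiff ℝ (⊤:ℕ∞) (deriv φ) := (contDiff_infty_iff_deriv.mp hφ).2
    have hdφ : Differentiable ℝ φ := hφ.differentiable (by simp)
    have ih := tendsto_div_pow_real b m (deriv φ) hφ'
      (fun j hj => by rw [← iteratedDeriv_succ']; exact h (j+1) (by omega))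
    have hg : ∀ x : ℝ, HasDerivAt (fun x => (x - b)^(m+1))
        (((m+1 : ℕ) : ℝ) * (x - b)^m * 1) x :=
      fun x => ((hasDerivAt_id x).sub_const b).pow (m+1)
    have hmem : ∀ᶠ x in 𝓝[<] b, x ∈ Iio b := eventually_mem_nhdsWithin
    apply deriv.lhopital_zero_nhdsLT
    · exact Eventually.of_forall fun x => hdφ.differentiableAt
    · filter_upwards [hmem] with x hx
      rw [(hg x).deriv]
      have : x - b ≠ 0 := sub_ne_zero.mpr (ne_of_lt hx)
      positivity
    · have : Tendsto φ (𝓝[<] b) (𝓝 (φ b)) :=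
        (hφ.continuous.tendsto b).mono_left nhdsWithin_le_nhds
      have h0 : φ b = 0 := by simpa [iteratedDeriv_zero] using h 0 (by omega)
      simpa [h0] using this
    · have : Tendsto (fun x : ℝ => (x - b)^(m+1)) (𝓝[<] b) (𝓝 ((b - b)^(m+1))) :=
        ((continuous_id.sub continuous_const).pow (m+1)).tendsto b |>.mono_left
          nhdsWithin_le_nhds
      simpa using this
    · have heq : ∀ x : ℝ, deriv φ x / deriv (fun x => (x - b)^(m+1)) x
          = (deriv φ x / (x - b)^m) / ((m+1 : ℕ) : ℝ) := by
        intro x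
        rw [(hg x).deriv]
        rw [mul_one, div_div, mul_comm]
      have := Filter.Tendsto.div_const ih ((m+1 : ℕ) : ℝ)
      rw [show iteratedDeriv m (deriv φ) b = iteratedDeriv (m+1) φ b by
        rw [iteratedDeriv_succ']] at this
      have hval : iteratedDeriv (m+1) φ b / (m.factorial : ℝ) / ((m+1 : ℕ) : ℝ)
          = iteratedDeriv (m+1) φ b / ((m+1).factorial : ℝ) := by
        rw [div_div, Nat.factorial_succ]
        push_cast
        ring_nf
      rw [hval] at this
      exact Tendsto.congr (fun x => (heq x).symm) this

lemma iteratedDeriv_clm (g : ℂ →L[ℝ] ℝ) (φ : ℝ → ℂ) (hφ : ContDiff ℝ (⊤:ℕ∞) φ) (m : ℕ)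
    (x : ℝ) : iteratedDeriv m (fun y => g (φ y)) x = g (iteratedDeriv m φ x) := by
  rw [iteratedDeriv_eq_iteratedFDeriv, iteratedDeriv_eq_iteratedFDeriv]
  rw [show (fun y => g (φ y)) = g ∘ φ from rfl,
    g.iteratedFDeriv_comp_left (hφ.of_le
      (by exact_mod_cast (le_top : (m:ℕ∞) ≤ ⊤) :
        (m : WithTop ℕ∞) ≤ ((⊤:ℕ∞) : WithTop ℕ∞))).contDiffAt le_rfl]
  rfl

lemma contDiff_clm_comp (g : ℂ →L[ℝ] ℝ) (φ : ℝ → ℂ) (hφ : ContDiff ℝ (⊤:ℕ∞) φ) :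
    ContDiff ℝ (⊤:ℕ∞) (fun y => g (φ y)) := g.contDiff.comp hφ

lemma tendsto_div_pow_complex (b : ℝ) (m : ℕ) (φ : ℝ → ℂ) (hφ : ContDiff ℝ (⊤:ℕ∞) φ)
    (h : ∀ j < m, iteratedDeriv j φ b = 0) :
    Tendsto (fun x => φ x / (((x - b)^m : ℝ) : ℂ)) (𝓝[<] b)
      (𝓝 (iteratedDeriv m φ b / (m.factorial : ℂ))) := by
  have hu := tendsto_div_pow_real b m (fun y => Complex.reCLM (φ y))
    (contDiff_clm_comp _ _ hφ)
    (fun j hj => by rw [iteratedDeriv_clm _ _ hφ, h j hj]; simp)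
  have hv := tendsto_div_pow_real b m (fun y => Complex.imCLM (φ y))
    (contDiff_clm_comp _ _ hφ)
    (fun j hj => by rw [iteratedDeriv_clm _ _ hφ, h j hj]; simp)
  rw [iteratedDeriv_clm _ _ hφ] at hu hv
  have key := ((Complex.continuous_ofReal.tendsto _).comp hu).add
    (((Complex.continuous_ofReal.tendsto _).comp hv).mul_const Complex.I)
  have hval : ((((iteratedDeriv m φ b).re / m.factorial : ℝ)) : ℂ)
      + ((((iteratedDeriv m φ b).im / m.factorial : ℝ)) : ℂ) * Complex.I
      = iteratedDeriv m φ b / (m.factorial : ℂ) := by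
    have : ((m.factorial : ℂ)) = (((m.factorial : ℝ)) : ℂ) := by push_cast; ring
    rw [this, Complex.ext_iff]
    simp [Complex.div_ofReal_re, Complex.div_ofReal_im]
  simp only [Complex.reCLM_apply, Complex.imCLM_apply] at key
  rw [hval] at key
  refine key.congr fun x => ?_
  simp only [Function.comp]
  rw [eq_comm, Complex.div_ofReal, Complex.mk_eq_add_mul_I]

lemma tendsto_ratio_zero (b : ℝ) (m : ℕ) (w ψ : ℝ → ℂ)
    (hw : ContDiff ℝ (⊤:ℕ∞) w) (hψ : ContDiff ℝ (⊤:ℕ∞) ψ)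
    (hwz : ∀ j ≤ m, iteratedDeriv j w b = 0)
    (hψz : ∀ j < m, iteratedDeriv j ψ b = 0) (hψm : iteratedDeriv m ψ b ≠ 0) :
    Tendsto (fun x => w x / ψ x) (𝓝[<] b) (𝓝 0) := by
  have h1 := tendsto_div_pow_complex b m w hw (fun j hj => hwz j (le_of_lt hj))
  have h2 := tendsto_div_pow_complex b m ψ hψ hψz
  have hL : iteratedDeriv m ψ b / (m.factorial : ℂ) ≠ 0 :=
    div_ne_zero hψm (by exact_mod_cast m.factorial_ne_zero)
  rw [hwz m le_rfl, zero_div] at h1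
  have := h1.div h2 hL
  rw [zero_div] at this
  refine this.congr' ?_
  filter_upwards [eventually_mem_nhdsWithin] with x (hx : x ∈ Iio b)
  have hc : (((x - b)^m : ℝ) : ℂ) ≠ 0 := by
    simp only [ne_eq, Complex.ofReal_eq_zero]
    exact pow_ne_zero _ (sub_ne_zero.mpr (ne_of_lt hx))
  show w x / _ / (ψ x / _) = _
  rw [div_div_div_comm, div_self hc, div_one]

lemma tendsto_ratio_val (b : ℝ) (m : ℕ) (w ψ : ℝ → ℂ) (e : ℂ)
    (hw : ContDiff ℝ (⊤:ℕ∞) w) (hψ : ContDiff ℝ (⊤:ℕ∞) ψ)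
    (hψz : ∀ j < m, iteratedDeriv j ψ b = 0) (hψm : iteratedDeriv m ψ b ≠ 0)
    (hrz : ∀ j ≤ m, iteratedDeriv j (fun x => w x - e * ψ x) b = 0) :
    Tendsto (fun x => w x / ψ x) (𝓝[<] b) (𝓝 e) := by
  have h0 := tendsto_ratio_zero b m (fun x => w x - e * ψ x) ψ
    (hw.sub (contDiff_const.mul hψ)) hψ hrz hψz hψm
  have h2 := tendsto_div_pow_complex b m ψ hψ hψz
  have hψne : ∀ᶠ x in 𝓝[<] b, ψ x ≠ 0 := by
    have hL : iteratedDeriv m ψ b / (m.factorial : ℂ) ≠ 0 :=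
      div_ne_zero hψm (by exact_mod_cast m.factorial_ne_zero)
    filter_upwards [h2.eventually_ne hL, eventually_mem_nhdsWithin] with x hx1
      (hx2 : x ∈ Iio b)
    intro hx0
    apply hx1
    rw [hx0, zero_div]
  have key := (tendsto_const_nhds (x := e)).add h0
  rw [add_zero] at key
  refine key.congr' ?_
  filter_upwards [hψne] with x hx
  field_simp
  ring

lemma Dop.sub {f g : ℝ → ℂ} (hf : ContDiff ℝ (⊤:ℕ∞) f) (hg : ContDiff ℝ (⊤:ℕ∞) g) (c : ℂ) :
    Dop c (fun x => f x - g x) = fun x => Dop c f x - Dop c g x := by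
  funext x
  have hdf : DifferentiableAt ℝ f x :=
    (hf.differentiable (by simp)).differentiableAt
  have hdg : DifferentiableAt ℝ g x :=
    (hg.differentiable (by simp)).differentiableAt
  simp only [Dop, deriv_fun_sub hdf hdg]
  ring

lemma Dop.cmul {f : ℝ → ℂ} (hf : ContDiff ℝ (⊤:ℕ∞) f) (c e : ℂ) :
    Dop c (fun x => e * f x) = fun x => e * Dop c f x := by
  funext x
  have hdf : DifferentiableAt ℝ f x :=
    (hf.differentiable (by simp)).differentiableAt
  simp only [Dop, deriv_const_mul e hdf]
  ring

lemma LOp_zero : ∀ l : List ℂ, LOp l (fun _ => 0) = 0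
  | [] => rfl
  | c :: r => by
    show LOp r _ = 0
    rw [show (fun x => deriv (fun _ => (0:ℂ)) x - c * (0:ℂ)) = fun _ => (0:ℂ) by
      funext x; simp]
    exact LOp_zero r

lemma LOp_sub : ∀ (l : List ℂ) (f g : ℝ → ℂ), ContDiff ℝ (⊤:ℕ∞) f → ContDiff ℝ (⊤:ℕ∞) g →
    LOp l (fun x => f x - g x) = fun x => LOp l f x - LOp l g x
  | [], f, g, _, _ => rfl
  | c :: r, f, g, hf, hg => by
    show LOp r (Dop c fun x => f x - g x) = _
    rw [Dop.sub hf hg c]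
    exact LOp_sub r _ _ (Dop.contDiff hf c) (Dop.contDiff hg c)

lemma LOp_cmul : ∀ (l : List ℂ) (f : ℝ → ℂ), ContDiff ℝ (⊤:ℕ∞) f → ∀ e : ℂ,
    LOp l (fun x => e * f x) = fun x => e * LOp l f x
  | [], f, _, e => rfl
  | c :: r, f, hf, e => by
    show LOp r (Dop c fun x => e * f x) = _
    rw [Dop.cmul hf c e]
    exact LOp_cmul r _ (Dop.contDiff hf c) e

lemma ExpPoly.sub {l : List ℂ} {f g : ℝ → ℂ} (hf : f ∈ ExpPoly l) (hg : g ∈ ExpPoly l) :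
    (fun x => f x - g x) ∈ ExpPoly l := by
  refine ⟨hf.1.sub hg.1, ?_⟩
  rw [LOp_sub l f g hf.1 hg.1]
  funext x
  rw [hf.2, hg.2]
  simp

lemma ExpPoly.cmul {l : List ℂ} {f : ℝ → ℂ} (hf : f ∈ ExpPoly l) (e : ℂ) :
    (fun x => e * f x) ∈ ExpPoly l := by
  refine ⟨contDiff_const.mul hf.1, ?_⟩
  rw [LOp_cmul l f hf.1 e]
  funext x
  rw [hf.2]
  simp

lemma ExpPoly.zero_mem (l : List ℂ) : (fun _ => (0:ℂ)) ∈ ExpPoly l :=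
  ⟨contDiff_const, LOp_zero l⟩

def Qfun (q : ℕ → ℝ → ℂ) : ℕ → ℝ → ℂ := fun j => if j = 0 then (fun _ => 0) else q (j-1)

@[simp] lemma Qfun_zero (q : ℕ → ℝ → ℂ) : Qfun q 0 = fun _ => 0 := rfl
@[simp] lemma Qfun_succ (q : ℕ → ℝ → ℂ) (j : ℕ) : Qfun q (j+1) = q j := by simp [Qfun]

def coefC (d : ℕ → ℂ) (k : ℕ) : ℂ := (-1)^k * ∏ l ∈ Finset.range k, d l

lemma coefC_zero (d : ℕ → ℂ) : coefC d 0 = 1 := by simp [coefC]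

lemma coefC_succ (d : ℕ → ℂ) (j : ℕ) : coefC d (j+1) = -(d j) * coefC d j := by
  simp only [coefC, Finset.prod_range_succ, pow_succ]
  ring
/-- **Theorem (representation of `e^{λ_n(x−a)}` in the Bernstein basis).**
Suppose `E_{(λ_0,…,λ_n)}` and `E_{(λ_0,…,λ_{n−1})}` are extended Chebyshev systems
for `{a,b}`, `a ≠ b ∈ ℝ`, with Bernstein bases `p` resp. `q`, and let
`d_k = lim_{x↑b} (p k)'(x) / q k (x)`, `k = 0,…,n−1` (these limits exist and are
nonzero).  Then `e^{(x−a)λ_n} = p 0 (x) + ∑_{k=1}^{n} (−1)^k d_0⋯d_{k−1} p k (x)`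
for all `x`, and for each `k = 1,…,n−1`,
`d_0⋯d_{k−1} = (−1)^n e^{(b−a)λ_n} / (p n (b) · d_k⋯d_{n−1})`. -/
theorem exp_representation_in_bernstein_basis
    (n : ℕ) (hn : 1 ≤ n) (l' : List ℂ) (hl' : l'.length = n) (lamn : ℂ)
    (a b : ℝ) (hab : a ≠ b)
    (hcheb : IsExtChebyshev (l' ++ [lamn]) {a, b})
    (hcheb' : IsExtChebyshev l' {a, b})
    (p q : ℕ → ℝ → ℂ)
    (hp : IsBernsteinBasis (l' ++ [lamn]) a b p)
    (hq : IsBernsteinBasis l' a b q)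
    (d : ℕ → ℂ)
    (hd : ∀ k < n, Tendsto (fun x => deriv (p k) x / q k x) (𝓝[<] b) (𝓝 (d k)))
    (hd0 : ∀ k < n, d k ≠ 0) :
    (∀ x : ℝ, Complex.exp (((x : ℂ) - (a : ℂ)) * lamn) =
      p 0 x + ∑ k ∈ Finset.Icc 1 n,
        (-1 : ℂ) ^ k * (∏ l ∈ Finset.range k, d l) * p k x) ∧
    (∀ k, 1 ≤ k → k ≤ n - 1 →
      ∏ l ∈ Finset.range k, d l =
        (-1 : ℂ) ^ n * Complex.exp (((b : ℂ) - (a : ℂ)) * lamn) /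
          (p n b * ∏ l ∈ Finset.Icc k (n - 1), d l)) := by
  obtain ⟨m, rfl⟩ : ∃ m, n = m + 1 := ⟨n - 1, by omega⟩
  clear hn
  -- unpack the Bernstein bases
  have hp' : ∀ k, k ≤ m + 1 → p k ∈ ExpPoly (l' ++ [lamn]) ∧ HasZeroOfOrder (p k) a k ∧
      HasZeroOfOrder (p k) b (m + 1 - k) ∧ iteratedDeriv k (p k) a = 1 := by
    intro k hk
    have := hp k (by simp [hl']; omega)
    simpa [hl'] using this
  have hq' : ∀ k, k ≤ m → q k ∈ ExpPoly l' ∧ HasZeroOfOrder (q k) a k ∧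
      HasZeroOfOrder (q k) b (m - k) ∧ iteratedDeriv k (q k) a = 1 := by
    intro k hk
    have := hq k (by simp [hl']; omega)
    simpa [hl'] using this
  have pMem : ∀ k, k ≤ m+1 → p k ∈ ExpPoly (l' ++ [lamn]) := fun k hk => (hp' k hk).1
  have pS : ∀ k, k ≤ m+1 → ContDiff ℝ (⊤:ℕ∞) (p k) := fun k hk => (pMem k hk).1
  have paz : ∀ k, k ≤ m+1 → ∀ j < k, iteratedDeriv j (p k) a = 0 :=
    fun k hk => ((hp' k hk).2.1).1
  have pa1 : ∀ k, k ≤ m+1 → iteratedDeriv k (p k) a = 1 := fun k hk => (hp' k hk).2.2.2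
  have pbz : ∀ k, k ≤ m+1 → ∀ j < m+1-k, iteratedDeriv j (p k) b = 0 :=
    fun k hk => ((hp' k hk).2.2.1).1
  have pbn : ∀ k, k ≤ m+1 → iteratedDeriv (m+1-k) (p k) b ≠ 0 :=
    fun k hk => ((hp' k hk).2.2.1).2
  have qMem : ∀ k, k ≤ m → q k ∈ ExpPoly l' := fun k hk => (hq' k hk).1
  have qS : ∀ k, k ≤ m → ContDiff ℝ (⊤:ℕ∞) (q k) := fun k hk => (qMem k hk).1
  have qaz : ∀ k, k ≤ m → ∀ j < k, iteratedDeriv j (q k) a = 0 :=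
    fun k hk => ((hq' k hk).2.1).1
  have qa1 : ∀ k, k ≤ m → iteratedDeriv k (q k) a = 1 := fun k hk => (hq' k hk).2.2.2
  have qbz : ∀ k, k ≤ m → ∀ j < m-k, iteratedDeriv j (q k) b = 0 :=
    fun k hk => ((hq' k hk).2.2.1).1
  have qbn : ∀ k, k ≤ m → iteratedDeriv (m-k) (q k) b ≠ 0 :=
    fun k hk => ((hq' k hk).2.2.1).2
  have hlen1 : 1 ≤ l'.length := by omega
  -- properties of D p_k
  have DpMem : ∀ k, k ≤ m+1 → Dop lamn (p k) ∈ ExpPoly l' :=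
    fun k hk => Dop.mem_ExpPoly (pMem k hk)
  have DpS : ∀ k, k ≤ m+1 → ContDiff ℝ (⊤:ℕ∞) (Dop lamn (p k)) :=
    fun k hk => Dop.contDiff (pS k hk) lamn
  have Dpi : ∀ k, k ≤ m+1 → ∀ (j : ℕ) (x : ℝ), iteratedDeriv j (Dop lamn (p k)) x
      = iteratedDeriv (j+1) (p k) x - lamn * iteratedDeriv j (p k) x :=
    fun k hk j x => iteratedDeriv_Dop (pS k hk) lamn j x
  -- properties of the padded basis Q
  have QMem : ∀ k, k ≤ m+1 → Qfun q k ∈ ExpPoly l' := by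
    intro k hk
    cases k with
    | zero => exact ExpPoly.zero_mem l'
    | succ j => rw [Qfun_succ]; exact qMem j (by omega)
  have QS : ∀ k, k ≤ m+1 → ContDiff ℝ (⊤:ℕ∞) (Qfun q k) := fun k hk => (QMem k hk).1
  have Qaz : ∀ k, k ≤ m+1 → ∀ j, j < k-1 → iteratedDeriv j (Qfun q k) a = 0 := by
    intro k hk j hj
    cases k with
    | zero => omega
    | succ i => rw [Qfun_succ]; exact qaz i (by omega) j (by omega)
  have Qa1 : ∀ k, 1 ≤ k → k ≤ m+1 → iteratedDeriv (k-1) (Qfun q k) a = 1 := by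
    intro k hk1 hk
    cases k with
    | zero => omega
    | succ i => rw [Qfun_succ]; simpa using qa1 i (by omega)
  have Qbz : ∀ k, k ≤ m+1 → ∀ j, j < m+1-k → iteratedDeriv j (Qfun q k) b = 0 := by
    intro k hk j hj
    cases k with
    | zero => rw [Qfun_zero]; exact iteratedDeriv_zero_fun j b
    | succ i => rw [Qfun_succ]; exact qbz i (by omega) j (by omega)
  -- the key structural identity for k ≤ m
  have key : ∀ k, k ≤ m → ∀ x, Dop lamn (p k) x = Qfun q k x + d k * q k x := by
    intro k hk
    have hkm1 : k ≤ m + 1 := by omega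
    set e := iteratedDeriv k (fun x => Dop lamn (p k) x - Qfun q k x) a with he
    have hDQS : ContDiff ℝ (⊤:ℕ∞) (fun x => Dop lamn (p k) x - Qfun q k x) :=
      (DpS k hkm1).sub (QS k hkm1)
    have hiter : ∀ (j : ℕ) (x : ℝ),
        iteratedDeriv j (fun x => (Dop lamn (p k) x - Qfun q k x) - e * q k x) x
        = (iteratedDeriv j (Dop lamn (p k)) x - iteratedDeriv j (Qfun q k) x)
          - e * iteratedDeriv j (q k) x := by
      intro j x
      rw [iteratedDeriv_sub' j hDQS (contDiff_const.mul (qS k hk)),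
        iteratedDeriv_sub' j (DpS k hkm1) (QS k hkm1), iteratedDeriv_cmul j (qS k hk)]
    have he' : e = (iteratedDeriv k (Dop lamn (p k)) a - iteratedDeriv k (Qfun q k) a) := by
      rw [he, iteratedDeriv_sub' k (DpS k hkm1) (QS k hkm1)]
    have hr0 : (fun x => (Dop lamn (p k) x - Qfun q k x) - e * q k x) = 0 := by
      apply cheb_eq_zero hab hcheb'
        (ExpPoly.sub (ExpPoly.sub (DpMem k hkm1) (QMem k hkm1))
          (ExpPoly.cmul (qMem k hk) e)) (A := k+1) (B := m-k) (by omega) hlen1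
      · intro j hj
        rw [hiter]
        by_cases hjk : j = k
        · rw [hjk, he', qa1 k hk]
          ring
        · have hjk' : j < k := by omega
          rw [qaz k hk j hjk', mul_zero, sub_zero]
          by_cases hjk1 : j = k - 1
          · have hk1 : 1 ≤ k := by omega
            rw [hjk1, Qa1 k hk1 hkm1, Dpi k hkm1]
            rw [show k - 1 + 1 = k by omega, pa1 k hkm1, paz k hkm1 (k-1) (by omega)]
            ring
          · rw [Dpi k hkm1, Qaz k hkm1 j (by omega), paz k hkm1 j (by omega),
              paz k hkm1 (j+1) (by omega)]
            ring
      · intro j hj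
        rw [hiter, Dpi k hkm1, Qbz k hkm1 j (by omega), qbz k hk j (by omega),
          pbz k hkm1 j (by omega), pbz k hkm1 (j+1) (by omega)]
        ring
    have hkey0 : ∀ x, Dop lamn (p k) x = Qfun q k x + e * q k x := by
      intro x
      have hx := congrFun hr0 x
      simp only [Pi.zero_apply] at hx
      linear_combination hx
    -- identify e with d k via the limit
    have hde : d k = e := by
      have hw : (fun x => deriv (p k) x - e * q k x) = fun x =>
          Qfun q k x - (-lamn) * p k x := by
        funext x
        have := hkey0 x
        simp only [Dop] at this
        linear_combination this
      have htends : Tendsto (fun x => deriv (p k) x / q k x) (𝓝[<] b) (𝓝 e) := by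
        apply tendsto_ratio_val b (m-k) (deriv (p k)) (q k) e
          ((contDiff_infty_iff_deriv.mp (pS k hkm1)).2) (qS k hk) (qbz k hk) (qbn k hk)
        intro j hj
        rw [hw, iteratedDeriv_sub' j (QS k hkm1) (contDiff_const.mul (pS k hkm1)),
          iteratedDeriv_cmul j (pS k hkm1), Qbz k hkm1 j (by omega),
          pbz k hkm1 j (by omega)]
        ring
      exact tendsto_nhds_unique (hd k (by omega)) htends
    intro x
    rw [hkey0 x, hde]
  -- the top identity
  have key_top : ∀ x, Dop lamn (p (m+1)) x = q m x := by
    have hr0 : (fun x => Dop lamn (p (m+1)) x - q m x) = 0 := by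
      apply cheb_eq_zero hab hcheb'
        (ExpPoly.sub (DpMem (m+1) le_rfl) (qMem m le_rfl)) (A := m+1) (B := 0)
        (by omega) hlen1
      · intro j hj
        rw [iteratedDeriv_sub' j (DpS (m+1) le_rfl) (qS m le_rfl), Dpi (m+1) le_rfl]
        by_cases hjm : j = m
        · rw [hjm, pa1 (m+1) le_rfl, paz (m+1) le_rfl m (by omega), qa1 m le_rfl]
          ring
        · rw [paz (m+1) le_rfl j (by omega), paz (m+1) le_rfl (j+1) (by omega),
            qaz m le_rfl j (by omega)]
          ring
      · intro j hj
        omega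
    intro x
    have hx := congrFun hr0 x
    simp only [Pi.zero_apply] at hx
    linear_combination hx
  -- telescoping sum
  have claim : ∀ (x : ℝ) (j : ℕ), j ≤ m+1 →
      ∑ k ∈ Finset.range j, coefC d k * Dop lamn (p k) x = -(coefC d j * Qfun q j x) := by
    intro x j
    induction j with
    | zero => intro _; simp
    | succ j ih =>
      intro hj
      rw [Finset.sum_range_succ, ih (by omega), key j (by omega) x, Qfun_succ,
        coefC_succ]
      ring
  have SUMKEY : ∀ x, ∑ k ∈ Finset.range (m+2), coefC d k * Dop lamn (p k) x = 0 := by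
    intro x
    rw [show m+2 = (m+1)+1 from rfl, Finset.sum_range_succ, claim x (m+1) le_rfl,
      key_top x, Qfun_succ]
    ring
  -- the exponential and the function g
  set E : ℝ → ℂ := fun x => Complex.exp (((x : ℂ) - (a : ℂ)) * lamn) with hE
  have hEd : ∀ x, HasDerivAt E (lamn * E x) x := by
    intro x
    have h0 : HasDerivAt (fun y : ℝ => ((y : ℂ) - (a : ℂ)) * lamn) lamn x := by
      simpa using ((Complex.ofRealCLM.hasDerivAt (x := x)).sub_const ((a : ℝ) : ℂ)).mul_const lamn
    simpa [hE, mul_comm] using h0.cexp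
  set g : ℝ → ℂ := fun x => E x - ∑ k ∈ Finset.range (m+2), coefC d k * p k x with hgdef
  have hpd : ∀ x, HasDerivAt (fun y => ∑ k ∈ Finset.range (m+2), coefC d k * p k y)
      (∑ k ∈ Finset.range (m+2), coefC d k * deriv (p k) x) x := by
    intro x
    apply HasDerivAt.fun_sum
    intro k hk
    have hkm : k ≤ m + 1 := by simpa [Finset.mem_range] using Nat.lt_succ_iff.mp (by
      exact Finset.mem_range.mp hk)
    exact (((pS k hkm).differentiable (by simp)).differentiableAt
      |>.hasDerivAt).const_mul (coefC d k)
  have hgd : ∀ x, HasDerivAt g (lamn * g x) x := by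
    intro x
    have h2 := (hEd x).sub (hpd x)
    have h3 : ∑ k ∈ Finset.range (m+2), coefC d k * deriv (p k) x
        = lamn * ∑ k ∈ Finset.range (m+2), coefC d k * p k x := by
      have h4 := SUMKEY x
      simp only [Dop] at h4
      rw [Finset.mul_sum, ← sub_eq_zero, ← Finset.sum_sub_distrib, ← h4]
      apply Finset.sum_congr rfl
      intro k _
      ring
    have h5 : lamn * E x - ∑ k ∈ Finset.range (m+2), coefC d k * deriv (p k) x
        = lamn * g x := by
      rw [h3, hgdef]
      ring
    rw [← h5]
    exact h2
  have hga : g a = 0 := by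
    have h0 : ∑ k ∈ Finset.range (m+2), coefC d k * p k a = 1 := by
      rw [Finset.sum_eq_single 0]
      · have h1 := pa1 0 (by omega)
        rw [iteratedDeriv_zero] at h1
        rw [coefC_zero, h1, one_mul]
      · intro k hk hk0
        have h2 := paz k (by simp [Finset.mem_range] at hk; omega) 0 (by omega)
        rw [iteratedDeriv_zero] at h2
        rw [h2, mul_zero]
      · intro h
        exact absurd (Finset.mem_range.mpr (by omega)) h
    have hEa : E a = 1 := by simp [hE]
    rw [hgdef]
    simp only
    rw [h0, hEa, sub_self]
  have hg0 : ∀ x, g x = 0 := by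
    have hh : ∀ x : ℝ, HasDerivAt (fun y : ℝ => Complex.exp (-(((y:ℂ) - (a:ℂ)) * lamn)) * g y) 0 x := by
      intro x
      have h0 : HasDerivAt (fun y : ℝ => -(((y : ℂ) - (a : ℂ)) * lamn)) (-lamn) x := by
        have := ((Complex.ofRealCLM.hasDerivAt (x := x)).sub_const ((a : ℝ) : ℂ)).mul_const lamn
        simpa using this.fun_neg
      have h1 := (h0.cexp).fun_mul (hgd x)
      convert h1 using 1
      · rfl
      · ring
    have hconst := is_const_of_deriv_eq_zero (fun x => (hh x).differentiableAt)
      (fun x => (hh x).deriv)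
    intro x
    have h2 := hconst x a
    have h3 : Complex.exp (-(((a:ℂ) - (a:ℂ)) * lamn)) * g a = 0 := by
      rw [hga, mul_zero]
    rw [h3] at h2
    exact (mul_eq_zero.mp h2).resolve_left (Complex.exp_ne_zero _)
  have REP : ∀ x, E x = ∑ k ∈ Finset.range (m+2), coefC d k * p k x := by
    intro x
    have := hg0 x
    rw [hgdef] at this
    simp only at this
    linear_combination this
  constructor
  · intro x
    have h1 : ∑ k ∈ Finset.range (m+2), coefC d k * p k x
        = p 0 x + ∑ k ∈ Finset.Icc 1 (m+1), (-1:ℂ)^k * (∏ l ∈ Finset.range k, d l) * p k x := by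
      rw [show Finset.range (m+2) = Finset.Ico 0 (m+2) by rw [Finset.range_eq_Ico],
        Finset.sum_eq_sum_Ico_succ_bot (by omega)]
      have h2 : Finset.Ico 1 (m+2) = Finset.Icc 1 (m+1) := by
        rw [← Finset.Ico_add_one_right_eq_Icc]; rfl
      rw [h2, coefC_zero, one_mul]
      simp only [coefC]
    rw [← h1, ← REP x]
  · intro k hk1 hk2
    simp only [Nat.add_sub_cancel] at hk2 ⊢
    have hvb : Complex.exp (((b:ℂ) - (a:ℂ)) * lamn) = coefC d (m+1) * p (m+1) b := by
      have h0 := REP b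
      rw [Finset.sum_eq_single (m+1)] at h0
      · exact h0
      · intro j hj hj0
        have hjm : j ≤ m := by simp [Finset.mem_range] at hj; omega
        have h2 := pbz j (by omega) 0 (by omega)
        rw [iteratedDeriv_zero] at h2
        rw [h2, mul_zero]
      · intro h
        exact absurd (Finset.mem_range.mpr (by omega)) h
    have pnb : p (m+1) b ≠ 0 := by
      have h1 := pbn (m+1) le_rfl
      rw [Nat.sub_self, iteratedDeriv_zero] at h1
      exact h1
    have prodI : ∏ l ∈ Finset.Icc k m, d l ≠ 0 :=
      Finset.prod_ne_zero_iff.mpr (fun l hl => hd0 l (by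
        simp only [Finset.mem_Icc] at hl; omega))
    have hsplit : (∏ l ∈ Finset.range (m+1), d l)
        = (∏ l ∈ Finset.range k, d l) * ∏ l ∈ Finset.Icc k m, d l := by
      rw [← Finset.Ico_add_one_right_eq_Icc]
      exact (Finset.prod_range_mul_prod_Ico d (by omega)).symm
    rw [eq_div_iff (mul_ne_zero pnb prodI), hvb]
    simp only [coefC]
    rw [hsplit]
    have h1 : ((-1:ℂ))^(m+1) * ((-1:ℂ))^(m+1) = 1 := by
      rw [← mul_pow]
      simp
    linear_combination (-((∏ l ∈ Finset.range k, d l) * (∏ l ∈ Finset.Icc k m, d l)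
      * p (m+1) b)) * h1
end
end

section
/- Suppose E_{(λ_0,λ_1,λ_2,…,λ_n)}, E_{(λ_0,λ_2,…,λ_n)}, E_{(λ_1,λ_2,…,λ_n)} and E_{(λ_2,…,λ_n)} are extended Chebyshev systems for {a,b}, a ≠ b ∈ ℝ, and let λ_0 ≠ λ_1. Then for each k there exists a nonzero constant C such that p_{(λ_0,λ_2,…,λ_n),k} − p_{(λ_1,λ_2,…,λ_n),k} = C · p_{(λ_0,λ_1,λ_2,…,λ_n),k+1}. Moreover lim_{x→b} p_{(λ_0,λ_2,…,λ_n),k}(x) / p_{(λ_1,λ_2,…,λ_n),k}(x) exists and is not equal to 1. -/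
open Filter Topology Set

noncomputable section

private lemma cdD {F : Type*} [NormedAddCommGroup F] [NormedSpace ℝ F] {f : ℝ → F}
    (hf : ContDiff ℝ (⊤ : ℕ∞) f) : ContDiff ℝ (⊤ : ℕ∞) (deriv f) :=
  (contDiff_infty_iff_deriv.mp hf).2

private lemma cdOp {f : ℝ → ℂ} (hf : ContDiff ℝ (⊤ : ℕ∞) f) (c : ℂ) :
    ContDiff ℝ (⊤ : ℕ∞) (fun x => deriv f x - c * f x) :=
  (cdD hf).sub (contDiff_const.mul hf)

private lemma dAt {F : Type*} [NormedAddCommGroup F] [NormedSpace ℝ F] {f : ℝ → F}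
    (hf : ContDiff ℝ (⊤ : ℕ∞) f) (x : ℝ) : DifferentiableAt ℝ f x :=
  (hf.differentiable (by simp)).differentiableAt

private lemma lop_contDiff (l : List ℂ) : ∀ {f : ℝ → ℂ}, ContDiff ℝ (⊤ : ℕ∞) f →
    ContDiff ℝ (⊤ : ℕ∞) (LOp l f) := by
  induction l with
  | nil => exact fun h => h
  | cons c r ih => exact fun hf => ih (cdOp hf c)

private lemma lop_sub (l : List ℂ) : ∀ {f g : ℝ → ℂ}, ContDiff ℝ (⊤ : ℕ∞) f →
    ContDiff ℝ (⊤ : ℕ∞) g →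
    LOp l (fun x => f x - g x) = fun x => LOp l f x - LOp l g x := by
  induction l with
  | nil => intro f g _ _; rfl
  | cons c r ih =>
    intro f g hf hg
    show LOp r _ = _
    have key : (fun x => deriv (fun y => f y - g y) x - c * (f x - g x))
        = fun x => (deriv f x - c * f x) - (deriv g x - c * g x) := by
      funext x
      rw [deriv_fun_sub (dAt hf x) (dAt hg x)]; ring
    rw [key, ih (cdOp hf c) (cdOp hg c)]
    rfl

private lemma lop_cmul (l : List ℂ) (C : ℂ) : ∀ {f : ℝ → ℂ}, ContDiff ℝ (⊤ : ℕ∞) f →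
    LOp l (fun x => C * f x) = fun x => C * LOp l f x := by
  induction l with
  | nil => intro f _; rfl
  | cons c r ih =>
    intro f hf
    show LOp r _ = _
    have key : (fun x => deriv (fun y => C * f y) x - c * (C * f x))
        = fun x => C * (deriv f x - c * f x) := by
      funext x
      rw [deriv_const_mul C (dAt hf x)]; ring
    rw [key, ih (cdOp hf c)]
    rfl

private lemma lop_deriv (l : List ℂ) : ∀ {f : ℝ → ℂ}, ContDiff ℝ (⊤ : ℕ∞) f →
    LOp l (deriv f) = deriv (LOp l f) := by
  induction l with
  | nil => intro f _; rfl
  | cons c r ih =>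
    intro f hf
    show LOp r _ = _
    have key : (fun x => deriv (deriv f) x - c * deriv f x)
        = deriv (fun x => deriv f x - c * f x) := by
      funext x
      rw [deriv_fun_sub (dAt (cdD hf) x) ((dAt hf x).const_mul c),
        deriv_const_mul c (dAt hf x)]
    rw [key, ih (cdOp hf c)]
    rfl

/-- If `LOp r u = 0` then `LOp r (u' - λ u) = 0`. -/

private lemma lop_D (r : List ℂ) (lam : ℂ) {u : ℝ → ℂ} (hu : ContDiff ℝ (⊤ : ℕ∞) u)
    (h : LOp r u = 0) : LOp r (fun x => deriv u x - lam * u x) = 0 := by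
  rw [lop_sub r (cdD hu) (contDiff_const.mul hu), lop_deriv r hu,
    lop_cmul r lam hu, h]
  funext x
  have : deriv (0 : ℝ → ℂ) = fun _ => (0:ℂ) := by
    funext y; exact deriv_const y 0
  simp [this]

private lemma mem0_to_full {μ : List ℂ} {lam0 lam1 : ℂ} {f : ℝ → ℂ}
    (h : f ∈ ExpPoly (lam0 :: μ)) : f ∈ ExpPoly (lam0 :: lam1 :: μ) := by
  obtain ⟨hf, hL⟩ := h
  exact ⟨hf, lop_D μ lam1 (cdOp hf lam0) hL⟩

private lemma mem1_to_full {μ : List ℂ} {lam0 lam1 : ℂ} {f : ℝ → ℂ}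
    (h : f ∈ ExpPoly (lam1 :: μ)) : f ∈ ExpPoly (lam0 :: lam1 :: μ) := by
  obtain ⟨hf, hL⟩ := h
  refine ⟨hf, ?_⟩
  show LOp μ (fun x => deriv (fun y => deriv f y - lam0 * f y) x
      - lam1 * (deriv f x - lam0 * f x)) = 0
  have key : (fun x => deriv (fun y => deriv f y - lam0 * f y) x
      - lam1 * (deriv f x - lam0 * f x))
      = fun x => deriv (fun y => deriv f y - lam1 * f y) x
      - lam0 * (deriv f x - lam1 * f x) := by
    funext x
    rw [deriv_fun_sub (dAt (cdD hf) x) ((dAt hf x).const_mul lam0),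
      deriv_fun_sub (dAt (cdD hf) x) ((dAt hf x).const_mul lam1),
      deriv_const_mul lam0 (dAt hf x), deriv_const_mul lam1 (dAt hf x)]
    ring
  rw [key]
  exact lop_D μ lam0 (cdOp hf lam1) hL

private lemma mem_inter {μ : List ℂ} {lam0 lam1 : ℂ} (h01 : lam0 ≠ lam1) {f : ℝ → ℂ}
    (h0 : f ∈ ExpPoly (lam0 :: μ)) (h1 : f ∈ ExpPoly (lam1 :: μ)) : f ∈ ExpPoly μ := by
  obtain ⟨hf, hL0⟩ := h0
  obtain ⟨-, hL1⟩ := h1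
  refine ⟨hf, ?_⟩
  have key : (fun x => (deriv f x - lam1 * f x) - (deriv f x - lam0 * f x))
      = fun x => (lam0 - lam1) * f x := by
    funext x; ring
  have h2 : LOp μ (fun x => (lam0 - lam1) * f x) = 0 := by
    rw [← key, lop_sub μ (cdOp hf lam1) (cdOp hf lam0)]
    rw [show LOp μ (fun x => deriv f x - lam1 * f x) = 0 from hL1,
      show LOp μ (fun x => deriv f x - lam0 * f x) = 0 from hL0]
    funext x; simp
  rw [lop_cmul μ (lam0 - lam1) hf] at h2
  funext x
  have := congrFun h2 x
  simpa [sub_eq_zero, h01] using this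

private lemma itD_zero_fun (n : ℕ) (x : ℝ) : iteratedDeriv n (fun _ : ℝ => (0:ℂ)) x = 0 := by
  induction n generalizing x with
  | zero => simp
  | succ n ih =>
    rw [iteratedDeriv_succ']
    have : deriv (fun _ : ℝ => (0:ℂ)) = fun _ : ℝ => (0:ℂ) := by
      funext y; exact deriv_const y 0
    rw [this]; exact ih x

private lemma itD_sub (n : ℕ) : ∀ {f g : ℝ → ℂ}, ContDiff ℝ (⊤ : ℕ∞) f →
    ContDiff ℝ (⊤ : ℕ∞) g →
    iteratedDeriv n (fun x => f x - g x)
      = fun x => iteratedDeriv n f x - iteratedDeriv n g x := by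
  induction n with
  | zero => intro f g _ _; simp [iteratedDeriv_zero]
  | succ n ih =>
    intro f g hf hg
    rw [iteratedDeriv_succ', iteratedDeriv_succ' (f := f), iteratedDeriv_succ' (f := g)]
    have key : deriv (fun x => f x - g x) = fun x => deriv f x - deriv g x := by
      funext x; exact deriv_sub (dAt hf x) (dAt hg x)
    rw [key, ih (cdD hf) (cdD hg)]

private lemma itD_cmul (n : ℕ) (C : ℂ) : ∀ {f : ℝ → ℂ}, ContDiff ℝ (⊤ : ℕ∞) f →
    iteratedDeriv n (fun x => C * f x) = fun x => C * iteratedDeriv n f x := by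
  induction n with
  | zero => intro f _; simp [iteratedDeriv_zero]
  | succ n ih =>
    intro f hf
    rw [iteratedDeriv_succ', iteratedDeriv_succ' (f := f)]
    have key : deriv (fun x => C * f x) = fun x => C * deriv f x := by
      funext x; exact deriv_const_mul C (dAt hf x)
    rw [key, ih (cdD hf)]

private lemma itD_clm (L : ℂ →L[ℝ] ℝ) {f : ℝ → ℂ} (hf : ContDiff ℝ (⊤ : ℕ∞) f)
    (n : ℕ) (x : ℝ) : iteratedDeriv n (fun y => L (f y)) x = L (iteratedDeriv n f x) := by
  have h := L.iteratedFDeriv_comp_left (hf.contDiffAt (x := x)) (i := n) (mod_cast le_top)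
  rw [iteratedDeriv_eq_iteratedFDeriv, iteratedDeriv_eq_iteratedFDeriv]
  show (iteratedFDeriv ℝ n (L ∘ f) x) (fun _ => 1) = _
  rw [h]
  rfl

private lemma taylor_lim_real (b : ℝ) : ∀ (m : ℕ) (f : ℝ → ℝ), ContDiff ℝ (⊤ : ℕ∞) f →
    (∀ j < m, iteratedDeriv j f b = 0) →
    Tendsto (fun x => f x / (x - b) ^ m) (𝓝[≠] b)
      (𝓝 (iteratedDeriv m f b / m.factorial)) := by
  intro m
  induction m with
  | zero =>
    intro f hf _
    simpa using ((hf.continuous.tendsto b).mono_left nhdsWithin_le_nhds)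
  | succ m ih =>
    intro f hf hz
    have hfd : ContDiff ℝ (⊤ : ℕ∞) (deriv f) := cdD hf
    have hdz : ∀ j < m, iteratedDeriv j (deriv f) b = 0 := by
      intro j hj
      have h := hz (j + 1) (by omega)
      rwa [iteratedDeriv_succ'] at h
    have ihd := ih (deriv f) hfd hdz
    have H := HasDerivAt.lhopital_zero_nhdsNE
      (f := f) (f' := deriv f)
      (g := fun x => (x - b) ^ (m + 1)) (g' := fun x => ((m : ℝ) + 1) * (x - b) ^ m)
      (a := b) (l := 𝓝 (iteratedDeriv (m + 1) f b / (m + 1).factorial))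
      ?_ ?_ ?_ ?_ ?_ ?_
    · exact H
    · exact Eventually.of_forall fun x => (dAt hf x).hasDerivAt
    · refine Eventually.of_forall fun x => ?_
      have h := ((hasDerivAt_id x).sub_const b).pow (m + 1)
      simp at h; exact h
    · filter_upwards [self_mem_nhdsWithin] with x hx
      have hxb : x - b ≠ 0 := sub_ne_zero.mpr hx
      positivity
    · have hfb : f b = 0 := by simpa using hz 0 (by omega)
      have := (hf.continuous.tendsto b).mono_left (nhdsWithin_le_nhds (s := {b}ᶜ))
      rwa [hfb] at this
    · have : Tendsto (fun x : ℝ => (x - b) ^ (m + 1)) (𝓝 b) (𝓝 ((b - b) ^ (m + 1))) := by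
        exact (continuous_id.sub continuous_const).pow (m+1) |>.tendsto b
      simpa using this.mono_left (nhdsWithin_le_nhds (s := {b}ᶜ))
    · have key : (fun x => deriv f x / (((m : ℝ) + 1) * (x - b) ^ m))
          = fun x => (deriv f x / (x - b) ^ m) / ((m : ℝ) + 1) := by
        funext x; rw [div_div, mul_comm]
      rw [key]
      have h2 := ihd.div_const ((m : ℝ) + 1)
      have e : iteratedDeriv m (deriv f) b / (m.factorial : ℝ) / ((m : ℝ) + 1)
          = iteratedDeriv (m + 1) f b / ((m + 1).factorial : ℝ) := by
        rw [← iteratedDeriv_succ', Nat.factorial_succ, div_div]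
        push_cast
        ring_nf
      rwa [e] at h2

private lemma ofReal_div_addI (z : ℂ) (r : ℝ) :
    ((z.re / r : ℝ) : ℂ) + ((z.im / r : ℝ) : ℂ) * Complex.I = z / r := by
  push_cast
  rw [div_mul_eq_mul_div, ← add_div, Complex.re_add_im]

private lemma taylor_lim (b : ℝ) (m : ℕ) (f : ℝ → ℂ) (hf : ContDiff ℝ (⊤ : ℕ∞) f)
    (hz : ∀ j < m, iteratedDeriv j f b = 0) :
    Tendsto (fun x => f x / (((x - b) ^ m : ℝ) : ℂ)) (𝓝[≠] b)
      (𝓝 (iteratedDeriv m f b / m.factorial)) := by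
  set u : ℝ → ℝ := fun x => Complex.reCLM (f x) with hu_def
  set v : ℝ → ℝ := fun x => Complex.imCLM (f x) with hv_def
  have hu : ContDiff ℝ (⊤ : ℕ∞) u := Complex.reCLM.contDiff.comp hf
  have hv : ContDiff ℝ (⊤ : ℕ∞) v := Complex.imCLM.contDiff.comp hf
  have huz : ∀ j < m, iteratedDeriv j u b = 0 := by
    intro j hj; rw [hu_def, itD_clm _ hf, hz j hj]; simp
  have hvz : ∀ j < m, iteratedDeriv j v b = 0 := by
    intro j hj; rw [hv_def, itD_clm _ hf, hz j hj]; simp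
  have Hu := taylor_lim_real b m u hu huz
  have Hv := taylor_lim_real b m v hv hvz
  have hud : iteratedDeriv m u b = (iteratedDeriv m f b).re := itD_clm _ hf m b
  have hvd : iteratedDeriv m v b = (iteratedDeriv m f b).im := itD_clm _ hf m b
  rw [hud] at Hu; rw [hvd] at Hv
  have H1 : Tendsto (fun x => (((u x / (x - b) ^ m : ℝ)) : ℂ)) (𝓝[≠] b)
      (𝓝 (((iteratedDeriv m f b).re / m.factorial : ℝ) : ℂ)) :=
    (Complex.continuous_ofReal.tendsto _).comp Hu
  have H2 : Tendsto (fun x => (((v x / (x - b) ^ m : ℝ)) : ℂ)) (𝓝[≠] b)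
      (𝓝 (((iteratedDeriv m f b).im / m.factorial : ℝ) : ℂ)) :=
    (Complex.continuous_ofReal.tendsto _).comp Hv
  have H := H1.add (H2.mul_const Complex.I)
  have key : (fun x => (((u x / (x - b) ^ m : ℝ)) : ℂ)
      + (((v x / (x - b) ^ m : ℝ)) : ℂ) * Complex.I)
      = fun x => f x / (((x - b) ^ m : ℝ) : ℂ) := by
    funext x
    exact ofReal_div_addI (f x) ((x - b) ^ m)
  have keyc : (((iteratedDeriv m f b).re / m.factorial : ℝ) : ℂ)
      + (((iteratedDeriv m f b).im / m.factorial : ℝ) : ℂ) * Complex.I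
      = iteratedDeriv m f b / (m.factorial : ℂ) := by
    have := ofReal_div_addI (iteratedDeriv m f b) m.factorial
    simpa using this
  rw [key, keyc] at H
  simpa using H

private lemma cheb_zero {l : List ℂ} {a b : ℝ} (hab : a ≠ b)
    (hC : IsExtChebyshev l {a, b}) {f : ℝ → ℂ} (hfE : f ∈ ExpPoly l) (ma mb : ℕ)
    (hma : ∀ j < ma, iteratedDeriv j f a = 0) (hmb : ∀ j < mb, iteratedDeriv j f b = 0)
    (hcount : l.length - 1 < ma + mb) : f = 0 := by
  by_contra hf
  have h := hC f hfE hf {a, b} (fun x => if x = a then ma else mb) ?_ ?_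
  · rw [Finset.sum_pair hab, if_pos rfl, if_neg hab.symm] at h
    omega
  · intro x hx
    simp only [Finset.coe_insert, Finset.coe_singleton] at hx
    exact hx
  · intro x hx j hj
    rcases Finset.mem_insert.mp hx with rfl | hx
    · exact hma j (by simpa using hj)
    · rw [Finset.mem_singleton] at hx
      subst hx
      exact hmb j (by simpa [hab.symm] using hj)

/-- **Theorem.** Suppose `E_{(λ_0,λ_1,λ_2,…,λ_n)}`, `E_{(λ_0,λ_2,…,λ_n)}`,
`E_{(λ_1,λ_2,…,λ_n)}` and `E_{(λ_2,…,λ_n)}` are extended Chebyshev systems for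
`{a,b}`, `a ≠ b ∈ ℝ`, and let `λ_0 ≠ λ_1`.  Then for each `k` there is a nonzero
constant `C` with
`p_{(λ_0,λ_2,…,λ_n),k} − p_{(λ_1,λ_2,…,λ_n),k} = C · p_{(λ_0,λ_1,λ_2,…,λ_n),k+1}`,
and `lim_{x→b} p_{(λ_0,λ_2,…,λ_n),k}(x) / p_{(λ_1,λ_2,…,λ_n),k}(x)` exists and
is different from `1`.  Here `μ` plays the role of `(λ_2,…,λ_n)`. -/
theorem bernstein_difference_and_limit
    (μ : List ℂ) (lam0 lam1 : ℂ) (h01 : lam0 ≠ lam1)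
    (a b : ℝ) (hab : a ≠ b)
    (hfull : IsExtChebyshev (lam0 :: lam1 :: μ) {a, b})
    (h0 : IsExtChebyshev (lam0 :: μ) {a, b})
    (h1 : IsExtChebyshev (lam1 :: μ) {a, b})
    (hμ : IsExtChebyshev μ {a, b})
    (pf p0 p1 : ℕ → ℝ → ℂ)
    (hpf : IsBernsteinBasis (lam0 :: lam1 :: μ) a b pf)
    (hp0 : IsBernsteinBasis (lam0 :: μ) a b p0)
    (hp1 : IsBernsteinBasis (lam1 :: μ) a b p1)
    (k : ℕ) (hk : k ≤ μ.length) :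
    (∃ C : ℂ, C ≠ 0 ∧ ∀ x : ℝ, p0 k x - p1 k x = C * pf (k + 1) x) ∧
    (∃ c : ℂ, Tendsto (fun x => p0 k x / p1 k x) (𝓝[≠] b) (𝓝 c) ∧ c ≠ 1) := by
  obtain ⟨hE0, hA0, hB0, hN0⟩ := hp0 k (by simpa using hk)
  obtain ⟨hE1, hA1, hB1, hN1⟩ := hp1 k (by simpa using hk)
  obtain ⟨hEf, hAf, hBf, hNf⟩ := hpf (k + 1) (by simp only [List.length_cons]; omega)
  set m := μ.length - k with hm
  have e0 : (lam0 :: μ).length - 1 - k = m := by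
    simp only [List.length_cons, hm, Nat.add_sub_cancel]
  have e1 : (lam1 :: μ).length - 1 - k = m := by
    simp only [List.length_cons, hm, Nat.add_sub_cancel]
  have ef : (lam0 :: lam1 :: μ).length - 1 - (k + 1) = m := by
    simp only [List.length_cons, hm]; omega
  rw [e0] at hB0
  rw [e1] at hB1
  rw [ef] at hBf
  -- the difference g
  have hgC : ContDiff ℝ (⊤ : ℕ∞) (fun x => p0 k x - p1 k x) := hE0.1.sub hE1.1
  have hgE : (fun x => p0 k x - p1 k x) ∈ ExpPoly (lam0 :: lam1 :: μ) := by
    have m0 := mem0_to_full (lam1 := lam1) hE0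
    have m1 := mem1_to_full (lam0 := lam0) hE1
    refine ⟨hgC, ?_⟩
    rw [lop_sub _ hE0.1 hE1.1, m0.2, m1.2]
    funext x; simp
  have hga : ∀ j < k + 1, iteratedDeriv j (fun x => p0 k x - p1 k x) a = 0 := by
    intro j hj
    rw [congrFun (itD_sub j hE0.1 hE1.1) a]
    rcases Nat.lt_succ_iff_lt_or_eq.mp hj with h | rfl
    · rw [hA0.1 j h, hA1.1 j h, sub_zero]
    · rw [hN0, hN1, sub_self]
  have hgb : ∀ j < m, iteratedDeriv j (fun x => p0 k x - p1 k x) b = 0 := by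
    intro j hj
    rw [congrFun (itD_sub j hE0.1 hE1.1) b, hB0.1 j hj, hB1.1 j hj, sub_zero]
  have hgne : (fun x => p0 k x - p1 k x) ≠ 0 := by
    intro h
    have hpe : p0 k = p1 k := by
      funext x
      have := congrFun h x
      simpa [sub_eq_zero] using this
    have hEμ : p0 k ∈ ExpPoly μ := mem_inter h01 hE0 (hpe ▸ hE1)
    have hp0ne : p0 k ≠ 0 := by
      intro h0
      apply hA0.2
      rw [h0]
      exact itD_zero_fun k a
    rcases Nat.eq_zero_or_pos μ.length with hμ0 | hμpos
    · obtain rfl : μ = [] := List.length_eq_zero_iff.mp hμ0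
      exact hp0ne hEμ.2
    · exact hp0ne (cheb_zero hab hμ hEμ k m hA0.1 hB0.1 (by omega))
  set C := iteratedDeriv (k + 1) (fun x => p0 k x - p1 k x) a with hCdef
  have hCne : C ≠ 0 := by
    intro hC0
    apply hgne
    refine cheb_zero hab hfull hgE (k + 2) m ?_ hgb
      (by simp only [List.length_cons]; omega)
    intro j hj
    rcases Nat.lt_succ_iff_lt_or_eq.mp hj with h | rfl
    · exact hga j h
    · rw [← hCdef]; exact hC0
  have hfCr : ContDiff ℝ (⊤ : ℕ∞) (fun x => C * pf (k + 1) x) := contDiff_const.mul hEf.1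
  have hhC : ContDiff ℝ (⊤ : ℕ∞) (fun x => (p0 k x - p1 k x) - C * pf (k + 1) x) :=
    hgC.sub hfCr
  have hhE : (fun x => (p0 k x - p1 k x) - C * pf (k + 1) x)
      ∈ ExpPoly (lam0 :: lam1 :: μ) := by
    refine ⟨hhC, ?_⟩
    rw [lop_sub _ hgC hfCr, hgE.2, lop_cmul _ C hEf.1, hEf.2]
    funext x; simp
  have hzero : (fun x => (p0 k x - p1 k x) - C * pf (k + 1) x) = 0 := by
    refine cheb_zero hab hfull hhE (k + 2) m ?_ ?_
      (by simp only [List.length_cons]; omega)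
    · intro j hj
      rw [congrFun (itD_sub j hgC hfCr) a, congrFun (itD_cmul j C hEf.1) a]
      rcases Nat.lt_succ_iff_lt_or_eq.mp hj with h | rfl
      · rw [hga j h, hAf.1 j h, mul_zero, sub_zero]
      · rw [hNf, mul_one, ← hCdef, sub_self]
    · intro j hj
      rw [congrFun (itD_sub j hgC hfCr) b, congrFun (itD_cmul j C hEf.1) b,
        hgb j hj, hBf.1 j hj, mul_zero, sub_zero]
  have hid : ∀ x, p0 k x - p1 k x = C * pf (k + 1) x := fun x =>
    sub_eq_zero.mp (congrFun hzero x)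
  constructor
  · exact ⟨C, hCne, hid⟩
  -- the limit
  have hdb : iteratedDeriv m (p0 k) b - iteratedDeriv m (p1 k) b
      = C * iteratedDeriv m (pf (k + 1)) b := by
    rw [← congrFun (itD_sub m hE0.1 hE1.1) b,
      show (fun x => p0 k x - p1 k x) = fun x => C * pf (k + 1) x from funext hid]
    exact congrFun (itD_cmul m C hEf.1) b
  have hne : iteratedDeriv m (p0 k) b ≠ iteratedDeriv m (p1 k) b := by
    intro h
    rw [h, sub_self] at hdb
    exact (mul_ne_zero hCne hBf.2) hdb.symm
  have hfacne : ((m.factorial : ℂ)) ≠ 0 := by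
    exact_mod_cast m.factorial_ne_zero
  have H0 := taylor_lim b m (p0 k) hE0.1 hB0.1
  have H1 := taylor_lim b m (p1 k) hE1.1 hB1.1
  have hL1 : iteratedDeriv m (p1 k) b / (m.factorial : ℂ) ≠ 0 := div_ne_zero hB1.2 hfacne
  have Hdiv := H0.div H1 hL1
  refine ⟨(iteratedDeriv m (p0 k) b / (m.factorial : ℂ))
    / (iteratedDeriv m (p1 k) b / (m.factorial : ℂ)), ?_, ?_⟩
  · refine Tendsto.congr' ?_ Hdiv
    filter_upwards [self_mem_nhdsWithin] with x hx
    have hr : (((x - b) ^ m : ℝ) : ℂ) ≠ 0 := by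
      exact_mod_cast pow_ne_zero m (sub_ne_zero.mpr hx)
    simp only [Pi.div_apply]
    rw [div_div_div_cancel_right₀ hr]
  · intro h
    rw [div_eq_one_iff_eq hL1] at h
    apply hne
    rw [div_eq_div_iff hfacne hfacne] at h
    exact mul_right_cancel₀ hfacne h
end
end

section
/- Suppose ω ≠ 0 is a complex number and λ_j = λ_0 + jω for j = 0,…,n. Then the functions p_{n,k}(x) := (e^{λ_0(x−a)} / (k! ω^k)) (e^{ω(x−a)} − 1)^k ((1 − e^{ω(x−b)}) / (1 − e^{ω(a−b)}))^{n−k}, k = 0,…,n, belong to E_{(λ_0,…,λ_n)} and form a Bernstein basis for a ≠ b satisfying the normalization k! · lim_{x→a} p_{n,k}(x)/(x−a)^k = 1. -/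
open Filter Topology Set

noncomputable section

/-- The explicit Bernstein basis for equidistant eigenvalues `λ_j = λ_0 + jω`:
`p_{n,k}(x) = (e^{λ_0(x−a)}/(k! ω^k)) (e^{ω(x−a)} − 1)^k
  ((1 − e^{ω(x−b)})/(1 − e^{ω(a−b)}))^{n−k}`. -/
def equidistantBernstein (n : ℕ) (lam0 ω : ℂ) (a b : ℝ) (k : ℕ) (x : ℝ) : ℂ :=
  Complex.exp (lam0 * ((x : ℂ) - (a : ℂ))) / ((k.factorial : ℂ) * ω ^ k) *
    (Complex.exp (ω * ((x : ℂ) - (a : ℂ))) - 1) ^ k *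
    ((1 - Complex.exp (ω * ((x : ℂ) - (b : ℂ)))) /
      (1 - Complex.exp (ω * ((a : ℂ) - (b : ℂ))))) ^ (n - k)

/- ### Auxiliary lemmas -/

namespace EqBBAux

open Polynomial

/-! Transfer of iterated derivatives through `Complex.ofReal` for entire functions. -/

lemma deriv_comp_ofReal' {H : ℂ → ℂ} (hH : Differentiable ℂ H) :
    deriv (fun t : ℝ => H t) = fun t : ℝ => deriv H t := by
  funext t
  exact ((hH t).hasDerivAt.comp_ofReal).deriv

lemma differentiable_deriv' {H : ℂ → ℂ} (hH : Differentiable ℂ H) :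
    Differentiable ℂ (deriv H) :=
  fun z => (AnalyticOnNhd.deriv (s := univ) (fun w _ => hH.analyticAt w) z
    (mem_univ z)).differentiableAt

lemma iteratedDeriv_comp_ofReal {H : ℂ → ℂ} (hH : Differentiable ℂ H) (m : ℕ) (x : ℝ) :
    iteratedDeriv m (fun t : ℝ => H t) x = iteratedDeriv m H x := by
  induction m generalizing H with
  | zero => simp
  | succ m ih =>
    rw [iteratedDeriv_succ', iteratedDeriv_succ', deriv_comp_ofReal' hH]
    exact ih (differentiable_deriv' hH)

/-! Iterated derivatives of `(z - a) ^ k * φ z` at `a`. -/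

lemma factor_iteratedDeriv (a : ℂ) :
    ∀ (k : ℕ) (φ : ℂ → ℂ), Differentiable ℂ φ →
      (∀ j < k, iteratedDeriv j (fun z => (z - a) ^ k * φ z) a = 0) ∧
      iteratedDeriv k (fun z => (z - a) ^ k * φ z) a = (k.factorial : ℂ) * φ a := by
  intro k
  induction k with
  | zero =>
    intro φ hφ
    refine ⟨fun j hj => absurd hj (by omega), ?_⟩
    simp [iteratedDeriv_zero]
  | succ k ih =>
    intro φ hφ
    have hψ : Differentiable ℂ (fun z => ((k : ℂ) + 1) * φ z + (z - a) * deriv φ z) :=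
      (hφ.const_mul _).add ((differentiable_id.sub_const a).mul (differentiable_deriv' hφ))
    have hder : deriv (fun z => (z - a) ^ (k + 1) * φ z)
        = fun z => (z - a) ^ k * (((k : ℂ) + 1) * φ z + (z - a) * deriv φ z) := by
      funext z
      have h1 : HasDerivAt (fun z : ℂ => (z - a) ^ (k + 1))
          ((((k : ℕ) + 1 : ℕ) : ℂ) * (z - a) ^ (k + 1 - 1) * 1) z :=
        ((hasDerivAt_id z).sub_const a).pow _
      have h2 := h1.mul (hφ z).hasDerivAt
      rw [show (fun z => (z - a) ^ (k + 1) * φ z) = (fun z => (z - a) ^ (k + 1)) * φ from rfl, h2.deriv]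
      push_cast
      ring
    refine ⟨?_, ?_⟩
    · intro j hj
      match j with
      | 0 => simp [iteratedDeriv_zero]
      | j + 1 =>
        rw [iteratedDeriv_succ', hder]
        exact (ih _ hψ).1 j (by omega)
    · rw [iteratedDeriv_succ', hder, (ih _ hψ).2]
      simp only [sub_self, zero_mul, add_zero, Nat.factorial_succ]
      push_cast
      ring

/-! The operator `LOp` kills `exp (c x) * R (exp (ω x))` for `natDegree R ≤ n`. -/

def G (ω c : ℂ) (R : ℂ[X]) : ℝ → ℂ :=
  fun x => Complex.exp (c * x) * R.eval (Complex.exp (ω * x))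

lemma G_hasDerivAt (ω c : ℂ) (R : ℂ[X]) (x : ℝ) :
    HasDerivAt (G ω c R)
      (Complex.exp (c * x) * c * R.eval (Complex.exp (ω * x)) +
        Complex.exp (c * x) *
          (R.derivative.eval (Complex.exp (ω * x)) * (Complex.exp (ω * x) * ω))) x := by
  have h1 : HasDerivAt (fun z : ℂ => Complex.exp (c * z)) (Complex.exp (c * (x : ℂ)) * (c * 1))
      (x : ℂ) := ((hasDerivAt_id (x : ℂ)).const_mul c).cexp
  have hE : HasDerivAt (fun z : ℂ => Complex.exp (ω * z)) (Complex.exp (ω * (x : ℂ)) * (ω * 1))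
      (x : ℂ) := ((hasDerivAt_id (x : ℂ)).const_mul ω).cexp
  have h2 : HasDerivAt (fun z : ℂ => R.eval (Complex.exp (ω * z)))
      (R.derivative.eval (Complex.exp (ω * (x : ℂ))) * (Complex.exp (ω * (x : ℂ)) * (ω * 1)))
      (x : ℂ) := (R.hasDerivAt _).comp _ hE
  have h3 := (h1.mul h2).comp_ofReal
  simp only [mul_one] at h3
  convert h3 using 1
  rfl

lemma G_deriv_sub (ω c : ℂ) (R : ℂ[X]) (x : ℝ) :
    deriv (G ω c R) x - c * G ω c R x = G ω (c + ω) (C ω * R.derivative) x := by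
  rw [(G_hasDerivAt ω c R x).deriv]
  simp only [G, eval_mul, eval_C, add_mul, Complex.exp_add]
  ring

lemma LOp_G (ω : ℂ) : ∀ (m : ℕ) (c : ℂ) (R : ℂ[X]), R.natDegree ≤ m →
    LOp (List.ofFn fun j : Fin (m + 1) => c + ((j : ℕ) : ℂ) * ω) (G ω c R) = 0 := by
  intro m
  induction m with
  | zero =>
    intro c R hR
    have hR' : R.derivative = 0 := by
      obtain ⟨r, rfl⟩ := Polynomial.natDegree_eq_zero.mp (le_antisymm hR (Nat.zero_le _))
      simp
    show (fun x => deriv (G ω c R) x - (c + ((0 : ℕ) : ℂ) * ω) * G ω c R x) = 0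
    funext x
    have := G_deriv_sub ω c R x
    rw [hR'] at this
    simp only [Nat.cast_zero, zero_mul, add_zero, Pi.zero_apply]
    rw [this]
    simp [G]
  | succ m ih =>
    intro c R hR
    rw [List.ofFn_succ]
    have hfix : (fun x => deriv (G ω c R) x - (c + ((0 : ℕ) : ℂ) * ω) * G ω c R x)
        = G ω (c + ω) (C ω * R.derivative) := by
      funext x
      simp only [Nat.cast_zero, zero_mul, add_zero]
      exact G_deriv_sub ω c R x
    show LOp (List.ofFn fun j : Fin (m + 1) => c + (((j.succ : Fin (m + 2)) : ℕ) : ℂ) * ω)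
      (fun x => deriv (G ω c R) x - (c + ((0 : ℕ) : ℂ) * ω) * G ω c R x) = 0
    rw [hfix]
    have hlist : (fun j : Fin (m + 1) => c + (((j.succ : Fin (m + 2)) : ℕ) : ℂ) * ω)
        = fun j : Fin (m + 1) => (c + ω) + ((j : ℕ) : ℂ) * ω := by
      funext j
      rw [Fin.val_succ j]
      push_cast
      ring
    rw [hlist]
    apply ih
    refine le_trans (natDegree_C_mul_le _ _) (le_trans (natDegree_derivative_le _) (by omega))

/-! The complex extension of the equidistant Bernstein functions. -/

def Hfun (n : ℕ) (lam0 ω : ℂ) (a b : ℝ) (k : ℕ) (z : ℂ) : ℂ :=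
  Complex.exp (lam0 * (z - (a : ℂ))) / ((k.factorial : ℂ) * ω ^ k) *
    (Complex.exp (ω * (z - (a : ℂ))) - 1) ^ k *
    ((1 - Complex.exp (ω * (z - (b : ℂ)))) /
      (1 - Complex.exp (ω * ((a : ℂ) - (b : ℂ))))) ^ (n - k)

lemma eqB_eq (n : ℕ) (lam0 ω : ℂ) (a b : ℝ) (k : ℕ) :
    equidistantBernstein n lam0 ω a b k = fun x : ℝ => Hfun n lam0 ω a b k x := rfl

lemma exp_affine_differentiable (μ c : ℂ) :
    Differentiable ℂ (fun z : ℂ => Complex.exp (μ * (z - c))) :=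
  ((differentiable_id.sub_const c).const_mul μ).cexp

lemma Hfun_differentiable (n : ℕ) (lam0 ω : ℂ) (a b : ℝ) (k : ℕ) :
    Differentiable ℂ (Hfun n lam0 ω a b k) := by
  unfold Hfun
  exact (((exp_affine_differentiable lam0 _).div_const _).mul
      (((exp_affine_differentiable ω _).sub_const 1).pow _)).mul
    ((((differentiable_const 1).sub (exp_affine_differentiable ω _)).div_const _).pow _)

/-! `dslope` facts. -/

lemma dslope_fact (d : ℂ) (c : ℂ) (f : ℂ → ℂ) (hf : Differentiable ℂ f) (hfc : f c = 0)
    (hdc : deriv f c = d) :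
    Differentiable ℂ (dslope f c) ∧ dslope f c c = d ∧
      ∀ z, (z - c) * dslope f c z = f z := by
  refine ⟨?_, by rwa [dslope_same], fun z => ?_⟩
  · intro z
    rcases eq_or_ne z c with rfl | hz
    · obtain ⟨p, hp⟩ := hf.analyticAt z
      exact hp.has_fpower_series_dslope_fslope.analyticAt.differentiableAt
    · exact (differentiableAt_dslope_of_ne hz).mpr (hf z)
  · have := sub_smul_dslope f c z
    rw [smul_eq_mul] at this
    rw [this, hfc, sub_zero]

lemma fa_deriv (ω : ℂ) (c : ℂ) :
    deriv (fun z : ℂ => Complex.exp (ω * (z - c)) - 1) c = ω := by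
  have h : HasDerivAt (fun z : ℂ => Complex.exp (ω * (z - c)) - 1)
      (Complex.exp (ω * (c - c)) * (ω * 1)) c :=
    (((hasDerivAt_id c).sub_const c).const_mul ω).cexp.sub_const 1
  rw [h.deriv]
  simp

lemma fb_deriv (ω : ℂ) (c : ℂ) :
    deriv (fun z : ℂ => 1 - Complex.exp (ω * (z - c))) c = -ω := by
  have h : HasDerivAt (fun z : ℂ => 1 - Complex.exp (ω * (z - c)))
      (-(Complex.exp (ω * (c - c)) * (ω * 1))) c :=
    ((((hasDerivAt_id c).sub_const c).const_mul ω).cexp.const_sub 1)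
  rw [h.deriv]
  simp

/-! Factorization at `a`. -/

def phiA (n : ℕ) (lam0 ω : ℂ) (a b : ℝ) (k : ℕ) (z : ℂ) : ℂ :=
  Complex.exp (lam0 * (z - (a : ℂ))) / ((k.factorial : ℂ) * ω ^ k) *
    (dslope (fun w : ℂ => Complex.exp (ω * (w - (a : ℂ))) - 1) (a : ℂ) z) ^ k *
    ((1 - Complex.exp (ω * (z - (b : ℂ)))) /
      (1 - Complex.exp (ω * ((a : ℂ) - (b : ℂ))))) ^ (n - k)

lemma dslope_a_fact (ω : ℂ) (a : ℝ) :
    Differentiable ℂ (dslope (fun w : ℂ => Complex.exp (ω * (w - (a : ℂ))) - 1) (a : ℂ)) ∧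
      dslope (fun w : ℂ => Complex.exp (ω * (w - (a : ℂ))) - 1) (a : ℂ) (a : ℂ) = ω ∧
      ∀ z, (z - (a : ℂ)) * dslope (fun w : ℂ => Complex.exp (ω * (w - (a : ℂ))) - 1) (a : ℂ) z
        = Complex.exp (ω * (z - (a : ℂ))) - 1 :=
  dslope_fact ω (a : ℂ) _ ((exp_affine_differentiable ω _).sub_const 1) (by simp)
    (fa_deriv ω _)

lemma phiA_differentiable (n : ℕ) (lam0 ω : ℂ) (a b : ℝ) (k : ℕ) :
    Differentiable ℂ (phiA n lam0 ω a b k) := by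
  unfold phiA
  exact (((exp_affine_differentiable lam0 _).div_const _).mul
      ((dslope_a_fact ω a).1.pow _)).mul
    ((((differentiable_const 1).sub (exp_affine_differentiable ω _)).div_const _).pow _)

lemma Hfun_factor_a (n : ℕ) (lam0 ω : ℂ) (a b : ℝ) (k : ℕ) :
    Hfun n lam0 ω a b k = fun z => (z - (a : ℂ)) ^ k * phiA n lam0 ω a b k z := by
  funext z
  unfold Hfun phiA
  rw [← (dslope_a_fact ω a).2.2 z, mul_pow]
  ring

lemma phiA_val (n : ℕ) (lam0 ω : ℂ) (hω : ω ≠ 0) (a b : ℝ)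
    (h1c0 : (1 : ℂ) - Complex.exp (ω * ((a : ℂ) - (b : ℂ))) ≠ 0) (k : ℕ) :
    phiA n lam0 ω a b k (a : ℂ) = ((k.factorial : ℂ))⁻¹ := by
  unfold phiA
  rw [(dslope_a_fact ω a).2.1, div_self h1c0]
  simp only [sub_self, mul_zero, Complex.exp_zero, one_pow, mul_one]
  rw [one_div ((k.factorial : ℂ) * ω ^ k)]
  field_simp

/-! Factorization at `b`. -/

def psiB (n : ℕ) (lam0 ω : ℂ) (a b : ℝ) (k : ℕ) (z : ℂ) : ℂ :=
  Complex.exp (lam0 * (z - (a : ℂ))) / ((k.factorial : ℂ) * ω ^ k) *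
    (Complex.exp (ω * (z - (a : ℂ))) - 1) ^ k *
    ((dslope (fun w : ℂ => 1 - Complex.exp (ω * (w - (b : ℂ)))) (b : ℂ) z) /
      (1 - Complex.exp (ω * ((a : ℂ) - (b : ℂ))))) ^ (n - k)

lemma dslope_b_fact (ω : ℂ) (b : ℝ) :
    Differentiable ℂ (dslope (fun w : ℂ => 1 - Complex.exp (ω * (w - (b : ℂ)))) (b : ℂ)) ∧
      dslope (fun w : ℂ => 1 - Complex.exp (ω * (w - (b : ℂ)))) (b : ℂ) (b : ℂ) = -ω ∧
      ∀ z, (z - (b : ℂ)) * dslope (fun w : ℂ => 1 - Complex.exp (ω * (w - (b : ℂ)))) (b : ℂ) z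
        = 1 - Complex.exp (ω * (z - (b : ℂ))) :=
  dslope_fact (-ω) (b : ℂ) _ ((differentiable_const 1).sub (exp_affine_differentiable ω _))
    (by simp) (fb_deriv ω _)

lemma psiB_differentiable (n : ℕ) (lam0 ω : ℂ) (a b : ℝ) (k : ℕ) :
    Differentiable ℂ (psiB n lam0 ω a b k) := by
  unfold psiB
  exact (((exp_affine_differentiable lam0 _).div_const _).mul
      (((exp_affine_differentiable ω _).sub_const 1).pow _)).mul
    (((dslope_b_fact ω b).1.div_const _).pow _)

lemma Hfun_factor_b (n : ℕ) (lam0 ω : ℂ) (a b : ℝ) (k : ℕ) :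
    Hfun n lam0 ω a b k = fun z => (z - (b : ℂ)) ^ (n - k) * psiB n lam0 ω a b k z := by
  funext z
  unfold Hfun psiB
  rw [← (dslope_b_fact ω b).2.2 z, mul_div_assoc, mul_pow]
  ring

lemma psiB_val_ne (n : ℕ) (lam0 ω : ℂ) (hω : ω ≠ 0) (a b : ℝ)
    (h1c0 : (1 : ℂ) - Complex.exp (ω * ((a : ℂ) - (b : ℂ))) ≠ 0)
    (hb1 : Complex.exp (ω * ((b : ℂ) - (a : ℂ))) ≠ 1) (k : ℕ) :
    psiB n lam0 ω a b k (b : ℂ) ≠ 0 := by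
  unfold psiB
  rw [(dslope_b_fact ω b).2.1]
  apply mul_ne_zero
  apply mul_ne_zero
  · exact div_ne_zero (Complex.exp_ne_zero _)
      (mul_ne_zero (Nat.cast_ne_zero.mpr (Nat.factorial_pos k).ne') (pow_ne_zero _ hω))
  · exact pow_ne_zero _ (sub_ne_zero.mpr hb1)
  · exact pow_ne_zero _ (div_ne_zero (neg_ne_zero.mpr hω) h1c0)

/-! The polynomial representation. -/

lemma Hfun_eq_G (n : ℕ) (lam0 ω : ℂ) (a b : ℝ) (k : ℕ) (hk : k ≤ n) :
    ∃ R : ℂ[X], R.natDegree ≤ n ∧ (fun x : ℝ => Hfun n lam0 ω a b k x) = G ω lam0 R := by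
  set A : ℂ := Complex.exp (ω * (a : ℂ)) with hA
  set B : ℂ := Complex.exp (ω * (b : ℂ)) with hB
  set c0 : ℂ := Complex.exp (ω * ((a : ℂ) - (b : ℂ))) with hc0
  set e : ℂ := (Complex.exp (lam0 * (a : ℂ)))⁻¹ * ((k.factorial : ℂ) * ω ^ k)⁻¹ *
    ((1 - c0)⁻¹) ^ (n - k) with he
  refine ⟨C e * (C A⁻¹ * X - 1) ^ k * (1 - C B⁻¹ * X) ^ (n - k), ?_, ?_⟩
  · have h1 : (C A⁻¹ * X - 1 : ℂ[X]).natDegree ≤ 1 :=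
      (natDegree_sub_le _ _).trans
        (max_le ((natDegree_C_mul_le _ _).trans natDegree_X_le) (by simp))
    have h2 : ((1 : ℂ[X]) - C B⁻¹ * X).natDegree ≤ 1 :=
      (natDegree_sub_le _ _).trans
        (max_le (by simp) ((natDegree_C_mul_le _ _).trans natDegree_X_le))
    calc (C e * (C A⁻¹ * X - 1) ^ k * (1 - C B⁻¹ * X) ^ (n - k)).natDegree
        ≤ (C e * (C A⁻¹ * X - 1) ^ k).natDegree + ((1 - C B⁻¹ * X) ^ (n - k)).natDegree :=
          natDegree_mul_le
      _ ≤ ((C e).natDegree + ((C A⁻¹ * X - 1) ^ k).natDegree)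
            + ((1 - C B⁻¹ * X) ^ (n - k)).natDegree := by
          exact Nat.add_le_add_right natDegree_mul_le _
      _ ≤ (0 + k * 1) + (n - k) * 1 := by
          refine Nat.add_le_add (Nat.add_le_add (by simp) ?_) ?_
          · exact natDegree_pow_le.trans (Nat.mul_le_mul_left _ h1)
          · exact natDegree_pow_le.trans (Nat.mul_le_mul_left _ h2)
      _ ≤ n := by omega
  · funext x
    simp only [G, Hfun, eval_mul, eval_pow, eval_sub, eval_one, eval_C, eval_X]
    have e1 : Complex.exp (lam0 * ((x : ℂ) - (a : ℂ)))
        = Complex.exp (lam0 * x) * (Complex.exp (lam0 * (a : ℂ)))⁻¹ := by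
      rw [mul_sub, Complex.exp_sub, div_eq_mul_inv]
    have e2 : Complex.exp (ω * ((x : ℂ) - (a : ℂ))) = A⁻¹ * Complex.exp (ω * x) := by
      rw [hA, mul_sub, Complex.exp_sub, div_eq_mul_inv, mul_comm]
    have e3 : Complex.exp (ω * ((x : ℂ) - (b : ℂ))) = B⁻¹ * Complex.exp (ω * x) := by
      rw [hB, mul_sub, Complex.exp_sub, div_eq_mul_inv, mul_comm]
    rw [e1, e2, e3, ← hc0, he, div_pow]
    simp only [div_eq_mul_inv, inv_pow]
    ring

end EqBBAux

open EqBBAux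

/-- **Proposition (equidistant eigenvalues).** Suppose `ω ≠ 0` and
`λ_j = λ_0 + jω`, `j = 0,…,n`.  Then the functions `p_{n,k}`, `k = 0,…,n`, above
belong to `E_{(λ_0,…,λ_n)}` and form a Bernstein basis for `a ≠ b`, satisfying the
normalization `k! · lim_{x→a} p_{n,k}(x)/(x−a)^k = 1`. -/
theorem equidistant_bernstein_is_basis
    (n : ℕ) (lam0 ω : ℂ) (hω : ω ≠ 0) (a b : ℝ) (hab : a ≠ b)
    (hne : Complex.exp (ω * ((a : ℂ) - (b : ℂ))) ≠ 1) :
    IsBernsteinBasis (List.ofFn fun j : Fin (n + 1) => lam0 + ((j : ℕ) : ℂ) * ω) a b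
      (equidistantBernstein n lam0 ω a b) ∧
    ∀ k ≤ n, Tendsto
      (fun x : ℝ => (k.factorial : ℂ) * equidistantBernstein n lam0 ω a b k x /
        ((x : ℂ) - (a : ℂ)) ^ k) (𝓝[≠] a) (𝓝 1) := by
  have h1c0 : (1 : ℂ) - Complex.exp (ω * ((a : ℂ) - (b : ℂ))) ≠ 0 :=
    sub_ne_zero.mpr (Ne.symm hne)
  have hb1 : Complex.exp (ω * ((b : ℂ) - (a : ℂ))) ≠ 1 := by
    intro h
    apply hne
    have hprod : Complex.exp (ω * ((a : ℂ) - (b : ℂ))) *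
        Complex.exp (ω * ((b : ℂ) - (a : ℂ))) = 1 := by
      rw [← Complex.exp_add]
      rw [show ω * ((a : ℂ) - (b : ℂ)) + ω * ((b : ℂ) - (a : ℂ)) = 0 by ring]
      exact Complex.exp_zero
    rw [h, mul_one] at hprod
    exact hprod
  -- key facts for each k ≤ n
  have key : ∀ k ≤ n,
      (∀ j < k, iteratedDeriv j (equidistantBernstein n lam0 ω a b k) a = 0) ∧
      iteratedDeriv k (equidistantBernstein n lam0 ω a b k) a = 1 := by
    intro k hk
    have hfac := Hfun_factor_a n lam0 ω a b k
    have hφ := phiA_differentiable n lam0 ω a b k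
    have hlem := factor_iteratedDeriv (a : ℂ) k (phiA n lam0 ω a b k) hφ
    have htrans : ∀ j, iteratedDeriv j (equidistantBernstein n lam0 ω a b k) a
        = iteratedDeriv j (Hfun n lam0 ω a b k) (a : ℂ) := fun j => by
      rw [eqB_eq]
      exact iteratedDeriv_comp_ofReal (Hfun_differentiable n lam0 ω a b k) j a
    constructor
    · intro j hj
      rw [htrans j, hfac]
      exact hlem.1 j hj
    · rw [htrans k, hfac, hlem.2, phiA_val n lam0 ω hω a b h1c0 k,
        mul_inv_cancel₀ (Nat.cast_ne_zero.mpr (Nat.factorial_pos k).ne')]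
  have keyb : ∀ k ≤ n,
      (∀ j < n - k, iteratedDeriv j (equidistantBernstein n lam0 ω a b k) b = 0) ∧
      iteratedDeriv (n - k) (equidistantBernstein n lam0 ω a b k) b ≠ 0 := by
    intro k hk
    have hfac := Hfun_factor_b n lam0 ω a b k
    have hψ := psiB_differentiable n lam0 ω a b k
    have hlem := factor_iteratedDeriv (b : ℂ) (n - k) (psiB n lam0 ω a b k) hψ
    have htrans : ∀ j, iteratedDeriv j (equidistantBernstein n lam0 ω a b k) b
        = iteratedDeriv j (Hfun n lam0 ω a b k) (b : ℂ) := fun j => by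
      rw [eqB_eq]
      exact iteratedDeriv_comp_ofReal (Hfun_differentiable n lam0 ω a b k) j b
    constructor
    · intro j hj
      rw [htrans j, hfac]
      exact hlem.1 j hj
    · rw [htrans _, hfac, hlem.2]
      exact mul_ne_zero (Nat.cast_ne_zero.mpr (Nat.factorial_pos _).ne')
        (psiB_val_ne n lam0 ω hω a b h1c0 hb1 k)
  constructor
  · -- Bernstein basis
    intro k hk
    have hk' : k ≤ n := by simpa using hk
    have hlen : (List.ofFn fun j : Fin (n + 1) => lam0 + ((j : ℕ) : ℂ) * ω).length - 1 = n := by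
      simp
    refine ⟨⟨?_, ?_⟩, ⟨(key k hk').1, by rw [(key k hk').2]; exact one_ne_zero⟩,
      ?_, (key k hk').2⟩
    · -- smoothness
      rw [eqB_eq]
      have h1 : ContDiff ℝ (⊤ : ℕ∞) (Hfun n lam0 ω a b k) :=
        ((Hfun_differentiable n lam0 ω a b k).contDiff).restrict_scalars ℝ
      exact h1.comp Complex.ofRealCLM.contDiff
    · -- LOp
      obtain ⟨R, hdeg, hRe⟩ := Hfun_eq_G n lam0 ω a b k hk'
      rw [eqB_eq, hRe]
      exact LOp_G ω n lam0 R hdeg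
    · -- zero of order n - k at b
      rw [hlen]
      exact ⟨(keyb k hk').1, (keyb k hk').2⟩
  · -- the limit
    intro k hk
    have hfac := Hfun_factor_a n lam0 ω a b k
    have hφ := phiA_differentiable n lam0 ω a b k
    have hcont : Tendsto (fun x : ℝ => (k.factorial : ℂ) * phiA n lam0 ω a b k x) (𝓝 a)
        (𝓝 1) := by
      have hc : Continuous fun x : ℝ => (k.factorial : ℂ) * phiA n lam0 ω a b k x :=
        continuous_const.mul (hφ.continuous.comp Complex.continuous_ofReal)
      have := hc.tendsto a
      rwa [phiA_val n lam0 ω hω a b h1c0 k,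
        mul_inv_cancel₀ (Nat.cast_ne_zero.mpr (Nat.factorial_pos k).ne')] at this
    refine (tendsto_nhdsWithin_of_tendsto_nhds hcont).congr' ?_
    filter_upwards [self_mem_nhdsWithin] with x hx
    have hxa : ((x : ℂ) - (a : ℂ)) ≠ 0 := by
      rw [sub_ne_zero]
      exact_mod_cast hx
    rw [eqB_eq]
    show (k.factorial : ℂ) * phiA n lam0 ω a b k x
      = (k.factorial : ℂ) * Hfun n lam0 ω a b k x / ((x : ℂ) - (a : ℂ)) ^ k
    rw [hfac]
    field_simp
end
end

section
/- Let ω ≠ 0 and λ_j = λ_0 + jω for j = 0,…,n. Then the Bernstein basis functions with respect to a ≠ b satisfy p_{(λ_0,λ_1,…,λ_{n−1}),k} − p_{(λ_1,λ_2,…,λ_n),k} = −(k+1) ω · p_{(λ_0,λ_1,λ_2,…,λ_n),k+1}. -/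
open Filter Topology Set

noncomputable section

open Polynomial Complex

/-- The operator on polynomials corresponding to `d/dx` on `x ↦ e^{μx} P(e^{ωx})`. -/
def Lmu (μ ω : ℂ) (P : ℂ[X]) : ℂ[X] := C μ * P + C ω * X * derivative P

lemma Lmu_step (μ ω u : ℂ) (m : ℕ) (Q : ℂ[X]) :
    Lmu μ ω ((X - C u)^(m+1) * Q) =
      (X - C u)^m * (C μ * (X - C u) * Q +
        C ω * X * (C ((m:ℂ)+1) * Q + (X - C u) * derivative Q)) := by
  unfold Lmu
  rw [derivative_mul, derivative_pow]
  simp only [derivative_X_sub_C, Nat.add_sub_cancel, Nat.cast_add, Nat.cast_one, C_add, C_1]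
  ring

lemma Lmu_iter (μ ω u : ℂ) :
    ∀ (i m : ℕ) (Q : ℂ[X]), i ≤ m →
      ∃ S : ℂ[X], (Lmu μ ω)^[i] ((X - C u)^m * Q) = (X - C u)^(m-i) * S ∧
        S.eval u = (m.descFactorial i : ℂ) * ω^i * u^i * Q.eval u := by
  intro i
  induction i with
  | zero => intro m Q _; exact ⟨Q, by simp⟩
  | succ i ih =>
    intro m Q him
    obtain ⟨m, rfl⟩ : ∃ m', m = m' + 1 := ⟨m - 1, by omega⟩
    rw [Function.iterate_succ_apply, Lmu_step]
    obtain ⟨S, hS, hSe⟩ := ih m _ (by omega)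
    refine ⟨S, by simpa using hS, ?_⟩
    rw [hSe]
    simp only [eval_add, eval_mul, eval_sub, eval_X, eval_C, sub_self, eval_one, eval_natCast,
      Nat.succ_descFactorial_succ]
    push_cast
    ring

lemma Lmu_vanish (μ ω u : ℂ) (k : ℕ) (P : ℂ[X]) (h : (X - C u)^k ∣ P) :
    ∀ i < k, ((Lmu μ ω)^[i] P).eval u = 0 := by
  intro i hik
  obtain ⟨Q, rfl⟩ := h
  obtain ⟨S, hS, _⟩ := Lmu_iter μ ω u i k Q (le_of_lt hik)
  rw [hS]
  simp [zero_pow (by omega : k - i ≠ 0)]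

lemma Lmu_val (μ ω u : ℂ) (k : ℕ) (Q : ℂ[X]) :
    ((Lmu μ ω)^[k] ((X - C u)^k * Q)).eval u =
      (k.factorial : ℂ) * ω^k * u^k * Q.eval u := by
  obtain ⟨S, hS, hSe⟩ := Lmu_iter μ ω u k k Q le_rfl
  rw [hS]
  simp [hSe, Nat.descFactorial_self]

lemma Lmu_dvd_of_vanish (μ ω u : ℂ) (hu : u ≠ 0) (hω : ω ≠ 0) (k : ℕ) (P : ℂ[X])
    (h : ∀ i < k, ((Lmu μ ω)^[i] P).eval u = 0) : (X - C u)^k ∣ P := by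
  induction k with
  | zero => simp
  | succ k ih =>
    obtain ⟨Q, rfl⟩ := ih (fun i hi => h i (by omega))
    have hk := h k (by omega)
    rw [Lmu_val] at hk
    have hQ : Q.eval u = 0 := by
      simpa [mul_eq_zero, hu, hω, pow_eq_zero_iff', Nat.factorial_ne_zero] using hk
    obtain ⟨R, rfl⟩ := dvd_iff_isRoot.mpr hQ
    exact ⟨R, by ring⟩

lemma expPoly_hasDerivAt (μ ω : ℂ) (P : ℂ[X]) (x : ℝ) :
    HasDerivAt (fun y : ℝ => exp (μ*y) * P.eval (exp (ω*y)))
      (exp (μ*x) * (Lmu μ ω P).eval (exp (ω*x))) x := by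
  have e1 : HasDerivAt (fun z : ℂ => exp (μ*z)) (exp (μ*(x:ℂ)) * (μ*1)) (x:ℂ) := by
    simpa using ((hasDerivAt_id (x:ℂ)).const_mul μ).cexp
  have e2 : HasDerivAt (fun z : ℂ => P.eval (exp (ω*z)))
      (P.derivative.eval (exp (ω*(x:ℂ))) * (exp (ω*(x:ℂ)) * (ω*1))) (x:ℂ) := by
    refine (P.hasDerivAt _).comp _ ?_
    simpa using ((hasDerivAt_id (x:ℂ)).const_mul ω).cexp
  have := (e1.mul e2).comp_ofReal
  exact this.congr_deriv (by
  simp only [Lmu, eval_add, eval_mul, eval_C, eval_X]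
  ring)

lemma expPoly_iteratedDeriv (μ ω : ℂ) (a : ℝ) :
    ∀ (i : ℕ) (P : ℂ[X]), iteratedDeriv i (fun y : ℝ => exp (μ*y) * P.eval (exp (ω*y))) a
      = exp (μ*a) * ((Lmu μ ω)^[i] P).eval (exp (ω*a)) := by
  intro i
  induction i with
  | zero => intro P; simp
  | succ i ih =>
    intro P
    rw [iteratedDeriv_succ']
    have : deriv (fun y : ℝ => exp (μ*y) * P.eval (exp (ω*y)))
        = fun y : ℝ => exp (μ*y) * (Lmu μ ω P).eval (exp (ω*y)) :=
      funext fun y => (expPoly_hasDerivAt μ ω P y).deriv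
    rw [this, ih, Function.iterate_succ_apply]

/-- A polynomial antiderivative. -/
def antider (Q : ℂ[X]) : ℂ[X] :=
  ∑ i ∈ Q.support, C (Q.coeff i / ((i:ℂ)+1)) * X^(i+1)

lemma antider_deriv (Q : ℂ[X]) : derivative (antider Q) = Q := by
  unfold antider
  rw [map_sum]
  have : ∀ i ∈ Q.support, derivative (C (Q.coeff i / ((i:ℂ)+1)) * X^(i+1))
      = C (Q.coeff i) * X^i := by
    intro i _
    rw [derivative_C_mul, derivative_X_pow]
    have h1 : ((i:ℂ)+1) ≠ 0 := Nat.cast_add_one_ne_zero i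
    rw [Nat.add_sub_cancel]
    rw [Nat.cast_add, Nat.cast_one]
    rw [← mul_assoc, ← C_mul, div_mul_cancel₀ _ h1]
  rw [Finset.sum_congr rfl this]
  conv_rhs => rw [← Q.sum_C_mul_X_pow_eq]
  rfl

lemma antider_degree (Q : ℂ[X]) (m : ℕ) (hQ : Q.degree < m) : (antider Q).degree ≤ m := by
  refine (degree_sum_le _ _).trans ?_
  rw [Finset.sup_le_iff]
  intro i hi
  refine (degree_mul_le _ _).trans ?_
  refine (add_le_add (degree_C_le) (degree_X_pow_le _)).trans ?_
  rw [zero_add]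
  have : (i:WithBot ℕ) ≤ Q.degree := le_degree_of_ne_zero (mem_support_iff.mp hi)
  have h2 : (i:ℕ) < m := by exact_mod_cast this.trans_lt hQ
  exact_mod_cast Nat.succ_le_of_lt h2

lemma ode_exp (μ : ℂ) (h : ℝ → ℂ) (hd : ∀ x, HasDerivAt h (μ * h x) x) :
    ∀ x, h x = h 0 * exp (μ*x) := by
  have key : ∀ x : ℝ, HasDerivAt (fun y : ℝ => exp (-μ*y) * h y) 0 x := by
    intro x
    have e1 : HasDerivAt (fun y : ℝ => exp (-μ*(y:ℂ))) (exp (-μ*(x:ℂ)) * (-μ*1)) x := by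
      have : HasDerivAt (fun z : ℂ => exp (-μ*z)) (exp (-μ*(x:ℂ)) * (-μ*1)) (x:ℂ) := by
        simpa using ((hasDerivAt_id (x:ℂ)).const_mul (-μ)).cexp
      exact this.comp_ofReal
    have := e1.mul (hd x)
    exact this.congr_deriv (by ring)
  have hconst : ∀ x : ℝ, exp (-μ*x) * h x = exp (-μ*0) * h 0 :=
    fun x => is_const_of_deriv_eq_zero (fun y => (key y).differentiableAt)
      (fun y => (key y).deriv) x 0
  intro x
  have hc := hconst x
  have h2 : h x = exp (μ*(x:ℂ)) * (exp (-μ*(x:ℂ)) * h x) := by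
    rw [← mul_assoc, ← Complex.exp_add]
    simp
  rw [h2, hc]
  simp
  ring

/-- Structure of exponential polynomials with equidistant eigenvalues. -/
lemma expPoly_struct (ω : ℂ) (hω : ω ≠ 0) :
    ∀ (m : ℕ) (μ : ℂ) (f : ℝ → ℂ),
      f ∈ ExpPoly (List.ofFn fun j : Fin m => μ + (j:ℂ) * ω) →
      ∃ P : ℂ[X], P.degree < m ∧ ∀ x : ℝ, f x = exp (μ*x) * P.eval (exp (ω*x)) := by
  intro m
  induction m with
  | zero =>
    intro μ f hf
    have hf0 : f = 0 := by simpa [LOp, List.ofFn_zero] using hf.2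
    exact ⟨0, by simpa using WithBot.bot_lt_coe 0, fun x => by simp [hf0]⟩
  | succ m ihm =>
    intro μ f hf
    obtain ⟨hsm, hop⟩ := hf
    have hlist : (List.ofFn fun j : Fin (m+1) => μ + (j:ℂ) * ω)
        = μ :: List.ofFn (fun j : Fin m => (μ + ω) + (j:ℂ) * ω) := by
      rw [List.ofFn_succ]
      simp only [Fin.val_zero, Nat.cast_zero, zero_mul, add_zero, Fin.val_succ]
      congr 1
      refine congrArg List.ofFn (funext fun j => ?_)
      push_cast
      ring
    rw [hlist] at hop
    change LOp _ (fun x => deriv f x - μ * f x) = 0 at hop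
    set g : ℝ → ℂ := fun x => deriv f x - μ * f x with hg
    have hgsm : ContDiff ℝ (⊤:ℕ∞) g :=
      ((contDiff_infty_iff_deriv.mp hsm).2).sub (contDiff_const.mul hsm)
    obtain ⟨Q, hQdeg, hQ⟩ := ihm (μ + ω) g ⟨hgsm, hop⟩
    set R : ℂ[X] := C ω⁻¹ * antider Q with hR
    have hRd : derivative R = C ω⁻¹ * Q := by rw [hR, derivative_C_mul, antider_deriv]
    set f₀ : ℝ → ℂ := fun y : ℝ => exp (μ*y) * R.eval (exp (ω*y)) with hf₀
    have hf₀d : ∀ x : ℝ, HasDerivAt f₀ (μ * f₀ x + g x) x := by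
      intro x
      have hD := expPoly_hasDerivAt μ ω R x
      convert hD using 1
      rw [hQ x, show ((μ+ω)*(x:ℂ)) = μ*x + ω*x by ring, Complex.exp_add]
      simp only [Lmu, hRd, eval_add, eval_mul, eval_C, eval_X, hf₀]
      field_simp
    have hfd : ∀ x : ℝ, HasDerivAt f (μ * f x + g x) x := by
      intro x
      have h1 : HasDerivAt f (deriv f x) x :=
        ((hsm.differentiable (by simp)) x).hasDerivAt
      have : deriv f x = μ * f x + g x := by rw [hg]; ring
      rwa [this] at h1
    have hhd : ∀ x : ℝ, HasDerivAt (fun y => f y - f₀ y) (μ * (f x - f₀ x)) x := by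
      intro x
      have := (hfd x).sub (hf₀d x)
      exact this.congr_deriv (by ring)
    have hode := ode_exp μ (fun y => f y - f₀ y) hhd
    refine ⟨C (f 0 - f₀ 0) + R, ?_, ?_⟩
    · have h1 : (C (f 0 - f₀ 0) + R).degree ≤ m := by
        refine (degree_add_le _ _).trans (max_le (degree_C_le.trans ?_) ?_)
        · exact_mod_cast Nat.zero_le m
        · refine (degree_mul_le _ _).trans ?_
          refine (add_le_add degree_C_le (antider_degree Q m hQdeg)).trans ?_
          rw [zero_add]
      exact lt_of_le_of_lt h1 (by exact_mod_cast Nat.lt_succ_self m)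
    · intro x
      have := hode x
      have hfx : f x = (f 0 - f₀ 0) * exp (μ*x) + f₀ x := by
        rw [← this]; ring
      rw [hfx, hf₀]
      simp only [eval_add, eval_C]
      ring

lemma Lmu_iterate_zero (μ ω : ℂ) (k : ℕ) : (Lmu μ ω)^[k] 0 = 0 := by
  induction k with
  | zero => rfl
  | succ k ih => rw [Function.iterate_succ_apply, show Lmu μ ω 0 = 0 by simp [Lmu], ih]

/-- Uniqueness/explicit form of a Bernstein-like normalized function. -/
lemma bernstein_explicit (ω : ℂ) (hω : ω ≠ 0) (a b : ℝ) (μ : ℂ) (m k : ℕ)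
    (hk : k + 1 ≤ m) (f : ℝ → ℂ)
    (hf : f ∈ ExpPoly (List.ofFn fun j : Fin m => μ + (j:ℂ) * ω))
    (ha : ∀ j < k, iteratedDeriv j f a = 0)
    (hb : ∀ j < m - 1 - k, iteratedDeriv j f b = 0)
    (hnorm : iteratedDeriv k f a = 1)
    (huv : exp (ω*(a:ℝ)) ≠ exp (ω*(b:ℝ))) :
    ∀ x : ℝ, f x = exp (μ*x) *
      ((exp (μ*(a:ℝ)) * (k.factorial:ℂ) * ω^k * exp (ω*(a:ℝ))^k *
        (exp (ω*(a:ℝ)) - exp (ω*(b:ℝ)))^(m-1-k))⁻¹ *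
        (exp (ω*x) - exp (ω*(a:ℝ)))^k * (exp (ω*x) - exp (ω*(b:ℝ)))^(m-1-k)) := by
  set u : ℂ := exp (ω*(a:ℝ)) with hu'
  set v : ℂ := exp (ω*(b:ℝ)) with hv'
  have hu : u ≠ 0 := exp_ne_zero _
  have hv : v ≠ 0 := exp_ne_zero _
  have hvu : v - u ≠ 0 := sub_ne_zero.mpr (Ne.symm huv)
  have huvne : u - v ≠ 0 := sub_ne_zero.mpr huv
  obtain ⟨P, hPdeg, hPx⟩ := expPoly_struct ω hω m μ f hf
  have hfe : f = fun y : ℝ => exp (μ*y) * P.eval (exp (ω*y)) := funext hPx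
  have hvana : ∀ i < k, ((Lmu μ ω)^[i] P).eval u = 0 := by
    intro i hi
    have h0 := ha i hi
    rw [hfe, expPoly_iteratedDeriv] at h0
    exact (mul_eq_zero.mp h0).resolve_left (exp_ne_zero _)
  have hvanb : ∀ i < m - 1 - k, ((Lmu μ ω)^[i] P).eval v = 0 := by
    intro i hi
    have h0 := hb i hi
    rw [hfe, expPoly_iteratedDeriv] at h0
    exact (mul_eq_zero.mp h0).resolve_left (exp_ne_zero _)
  have dvd1 : (X - C u)^k ∣ P := Lmu_dvd_of_vanish μ ω u hu hω k P hvana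
  have dvd2 : (X - C v)^(m-1-k) ∣ P := Lmu_dvd_of_vanish μ ω v hv hω _ P hvanb
  have hcop : IsCoprime (X - C u) (X - C v) := by
    refine ⟨C ((v-u)⁻¹), -C ((v-u)⁻¹), ?_⟩
    have h1 : C ((v-u)⁻¹) * (X - C u) + -C ((v-u)⁻¹) * (X - C v)
        = C ((v-u)⁻¹) * (C v - C u) := by ring
    rw [h1, ← C_sub, ← C_mul, inv_mul_cancel₀ hvu, C_1]
  obtain ⟨D, hPD⟩ := (hcop.pow).mul_dvd dvd1 dvd2
  -- D is a constant
  by_cases hD : D = 0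
  · exfalso
    rw [hD, mul_zero] at hPD
    rw [hfe, expPoly_iteratedDeriv, hPD, Lmu_iterate_zero] at hnorm
    simp at hnorm
  obtain ⟨d, hd⟩ : ∃ d : ℂ, C d = D := by
    rw [← natDegree_eq_zero]
    have hPne : P ≠ 0 := by
      rw [hPD]
      exact mul_ne_zero (mul_ne_zero (pow_ne_zero _ (X_sub_C_ne_zero u))
        (pow_ne_zero _ (X_sub_C_ne_zero v))) hD
    have h1 : P.natDegree < m := by
      rw [← natDegree_lt_iff_degree_lt hPne] at hPdeg
      exact hPdeg
    have h2 : P.natDegree = k + (m-1-k) + D.natDegree := by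
      rw [hPD, natDegree_mul (mul_ne_zero (pow_ne_zero _ (X_sub_C_ne_zero u))
        (pow_ne_zero _ (X_sub_C_ne_zero v))) hD,
        natDegree_mul (pow_ne_zero _ (X_sub_C_ne_zero u)) (pow_ne_zero _ (X_sub_C_ne_zero v)),
        natDegree_pow, natDegree_pow]
      simp [natDegree_X_sub_C]
    omega
  -- normalization determines d
  have hval : iteratedDeriv k f a = exp (μ*(a:ℝ)) *
      ((k.factorial : ℂ) * ω^k * u^k * (d * (u - v)^(m-1-k))) := by
    rw [hfe, expPoly_iteratedDeriv, hPD, ← hd]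
    rw [show (X - C u)^k * (X - C v)^(m-1-k) * C d = (X - C u)^k * (C d * (X - C v)^(m-1-k))
      from by ring, Lmu_val]
    simp [← hu']
  rw [hnorm] at hval
  have hdval : d = (exp (μ*(a:ℝ)) * (k.factorial:ℂ) * ω^k * u^k * (u - v)^(m-1-k))⁻¹ := by
    have hne : exp (μ*(a:ℝ)) * (k.factorial:ℂ) * ω^k * u^k * (u - v)^(m-1-k) ≠ 0 := by
      apply mul_ne_zero
      apply mul_ne_zero
      apply mul_ne_zero
      apply mul_ne_zero (exp_ne_zero _)
      · exact Nat.cast_ne_zero.mpr k.factorial_ne_zero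
      · exact pow_ne_zero _ hω
      · exact pow_ne_zero _ hu
      · exact pow_ne_zero _ huvne
    field_simp
    rw [hval]
    rw [eq_div_iff (Nat.cast_ne_zero.mpr k.factorial_ne_zero)]
    ring
  intro x
  rw [hPx x, hPD, ← hd, hdval]
  simp only [eval_mul, eval_pow, eval_sub, eval_X, eval_C]
  ring

lemma key_algebra (E T A U V ω : ℂ) (k j : ℕ)
    (hU : U ≠ 0) (hω : ω ≠ 0) (hk1 : (k:ℂ)+1 ≠ 0) :
    E * ((A * (k.factorial:ℂ) * ω^k * U^k * (U-V)^j)⁻¹ * (T-U)^k * (T-V)^j)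
      - (E*T) * ((A*U * (k.factorial:ℂ) * ω^k * U^k * (U-V)^j)⁻¹ * (T-U)^k * (T-V)^j)
    = -(((k:ℂ)+1) * ω) * (E * ((A * ((k+1).factorial:ℂ) * ω^(k+1) * U^(k+1) * (U-V)^j)⁻¹
        * (T-U)^(k+1) * (T-V)^j)) := by
  have hc : ∀ c : ℂ, c = A * (k.factorial:ℂ) * ω^k * U^k * (U-V)^j →
      (A*U*(k.factorial:ℂ)*ω^k*U^k*(U-V)^j)⁻¹ = c⁻¹ * U⁻¹ ∧
      (A*((k+1).factorial:ℂ)*ω^(k+1)*U^(k+1)*(U-V)^j)⁻¹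
        = c⁻¹ * (U⁻¹ * (((k:ℂ)+1)*ω)⁻¹) := by
    intro c hc
    constructor
    · rw [show A*U*(k.factorial:ℂ)*ω^k*U^k*(U-V)^j = c * U by rw [hc]; ring, mul_inv]
    · rw [Nat.factorial_succ]
      push_cast
      rw [show A*(((k:ℂ)+1)*(k.factorial:ℂ))*ω^(k+1)*U^(k+1)*(U-V)^j
          = c * (U * (((k:ℂ)+1)*ω)) by rw [hc]; ring, mul_inv, mul_inv]
  obtain ⟨h2, h3⟩ := hc _ rfl
  rw [h2, h3, pow_succ (T-U)]
  have hK : (((k:ℂ)+1)*ω) * (((k:ℂ)+1)*ω)⁻¹ = 1 := mul_inv_cancel₀ (mul_ne_zero hk1 hω)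
  have hU2 : U * U⁻¹ = 1 := mul_inv_cancel₀ hU
  set c := A * (k.factorial:ℂ) * ω^k * U^k * (U-V)^j
  set q := E * c⁻¹ * (T-U)^k * (T-V)^j with hq
  linear_combination (q*U⁻¹*T - q*U⁻¹*U) * hK - q * hU2

/-- **Lemma (equidistant eigenvalues).** Let `ω ≠ 0` and `λ_j = λ_0 + jω` for
`j = 0,…,n`.  Then the Bernstein basis functions with respect to `a ≠ b` satisfy
`p_{(λ_0,…,λ_{n−1}),k} − p_{(λ_1,…,λ_n),k} = −(k+1) ω · p_{(λ_0,λ_1,…,λ_n),k+1}`. -/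
theorem equidistant_bernstein_difference
    (n : ℕ) (hn : 1 ≤ n) (lam0 ω : ℂ) (hω : ω ≠ 0) (a b : ℝ) (hab : a ≠ b)
    (p01 p12 pfull : ℕ → ℝ → ℂ)
    (hp01 : IsBernsteinBasis (List.ofFn fun j : Fin n => lam0 + ((j : ℕ) : ℂ) * ω) a b p01)
    (hp12 : IsBernsteinBasis
      (List.ofFn fun j : Fin n => lam0 + (((j : ℕ) : ℂ) + 1) * ω) a b p12)
    (hpfull : IsBernsteinBasis
      (List.ofFn fun j : Fin (n + 1) => lam0 + ((j : ℕ) : ℂ) * ω) a b pfull) :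
    ∀ k < n, ∀ x : ℝ,
      p01 k x - p12 k x = -(((k : ℂ) + 1) * ω) * pfull (k + 1) x := by
  intro k hkn x
  by_cases huv : exp (ω*(a:ℝ)) = exp (ω*(b:ℝ))
  · -- degenerate case : contradiction with `pfull n`
    exfalso
    have hlen : (List.ofFn fun j : Fin (n+1) => lam0 + ((j:ℕ):ℂ) * ω).length = n + 1 := by simp
    obtain ⟨hmem, hza, hzb, hnorm⟩ := hpfull n (by rw [hlen]; omega)
    rw [hlen] at hzb
    have hzb0 : pfull n b ≠ 0 := by
      have h0 := hzb.2
      rw [show n + 1 - 1 - n = 0 from by omega, iteratedDeriv_zero] at h0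
      exact h0
    obtain ⟨P, hPdeg, hPx⟩ := expPoly_struct ω hω (n+1) lam0 (pfull n) hmem
    have hfe : pfull n = fun y : ℝ => exp (lam0*y) * P.eval (exp (ω*y)) := funext hPx
    have hvana : ∀ i < n, ((Lmu lam0 ω)^[i] P).eval (exp (ω*(a:ℝ))) = 0 := by
      intro i hi
      have h0 := hza.1 i hi
      rw [hfe, expPoly_iteratedDeriv] at h0
      exact (mul_eq_zero.mp h0).resolve_left (exp_ne_zero _)
    obtain ⟨D, hPD⟩ := Lmu_dvd_of_vanish lam0 ω _ (exp_ne_zero _) hω n P hvana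
    apply hzb0
    rw [hPx b, hPD]
    simp only [eval_mul, eval_pow, eval_sub, eval_X, eval_C]
    rw [← huv, sub_self, zero_pow (by omega : n ≠ 0), zero_mul, mul_zero]
  · -- nondegenerate case
    have hu : exp (ω*(a:ℝ)) ≠ 0 := exp_ne_zero _
    have huvne : exp (ω*(a:ℝ)) - exp (ω*(b:ℝ)) ≠ 0 := sub_ne_zero.mpr huv
    have hlen1 : (List.ofFn fun j : Fin n => lam0 + ((j:ℕ):ℂ) * ω).length = n := by simp
    obtain ⟨hm1, hza1, hzb1, hn1⟩ := hp01 k (by rw [hlen1]; omega)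
    rw [hlen1] at hzb1
    have h1 := bernstein_explicit ω hω a b lam0 n k (by omega) (p01 k) hm1 hza1.1 hzb1.1 hn1 huv
    have hlist2 : (List.ofFn fun j : Fin n => lam0 + (((j:ℕ):ℂ)+1) * ω)
        = List.ofFn fun j : Fin n => (lam0 + ω) + ((j:ℕ):ℂ) * ω :=
      congrArg List.ofFn (funext fun j => by ring)
    rw [hlist2] at hp12
    have hlen2 : (List.ofFn fun j : Fin n => (lam0 + ω) + ((j:ℕ):ℂ) * ω).length = n := by simp
    obtain ⟨hm2, hza2, hzb2, hn2⟩ := hp12 k (by rw [hlen2]; omega)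
    rw [hlen2] at hzb2
    have h2 := bernstein_explicit ω hω a b (lam0+ω) n k (by omega) (p12 k) hm2 hza2.1 hzb2.1 hn2 huv
    have hlen3 : (List.ofFn fun j : Fin (n+1) => lam0 + ((j:ℕ):ℂ) * ω).length = n + 1 := by simp
    obtain ⟨hm3, hza3, hzb3, hn3⟩ := hpfull (k+1) (by rw [hlen3]; omega)
    rw [hlen3] at hzb3
    have h3 := bernstein_explicit ω hω a b lam0 (n+1) (k+1) (by omega) (pfull (k+1)) hm3
      hza3.1 hzb3.1 hn3 huv
    rw [h1 x, h2 x, h3 x]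
    rw [show n + 1 - 1 - (k+1) = n - 1 - k from by omega]
    have e1 : exp ((lam0+ω)*(x:ℝ)) = exp (lam0*(x:ℝ)) * exp (ω*(x:ℝ)) := by
      rw [← Complex.exp_add]; ring_nf
    have e2 : exp ((lam0+ω)*(a:ℝ)) = exp (lam0*(a:ℝ)) * exp (ω*(a:ℝ)) := by
      rw [← Complex.exp_add]; ring_nf
    rw [e1, e2]
    have hfk : (k.factorial : ℂ) ≠ 0 := Nat.cast_ne_zero.mpr k.factorial_ne_zero
    have hEa : exp (lam0*(a:ℝ)) ≠ 0 := exp_ne_zero _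
    have hk1 : ((k:ℂ)+1) ≠ 0 := Nat.cast_add_one_ne_zero k
    exact key_algebra _ _ _ _ _ _ k (n-1-k) hu hω hk1
end
end

section
/- Let γ > 0. For each n ∈ ℕ and each j = 0,…,n, let a(n,j) ∈ (0,1) and b(n,j) > 0 be real numbers. Suppose that log b(n,j) / log a(n,j) → γ as n → ∞, uniformly in j (i.e. for every ε > 0 there is n_0 such that |log b(n,j)/log a(n,j) − γ| < ε for all n ≥ n_0 and all j = 0,…,n). Define A_k(n) := ∏_{j=k}^{n} a(n,j) and B_k(n) := ∏_{j=k}^{n} b(n,j). Then A_k(n)^γ − B_k(n) → 0 as n → ∞, uniformly in k (i.e. for every ε > 0 there is n_0 such that |A_k(n)^γ − B_k(n)| < ε for all n ≥ n_0 and all k = 0,…,n). -/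
open Filter Topology

private lemma abs_exp_sub_exp_le (x y : ℝ) :
    |Real.exp x - Real.exp y| ≤ Real.exp (max x y) * |x - y| := by
  wlog h : x ≤ y with H
  · rw [abs_sub_comm, max_comm, abs_sub_comm x y]
    exact H y x (le_of_not_ge h)
  rw [abs_of_nonpos (by simpa [Real.exp_le_exp] using h), abs_of_nonpos (by linarith),
    max_eq_right h]
  have h1 : 1 + (x - y) ≤ Real.exp (x - y) := by
    have := Real.add_one_le_exp (x - y); linarith
  have h2 : Real.exp x = Real.exp y * Real.exp (x - y) := by
    rw [← Real.exp_add]; ring_nf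
  nlinarith [Real.exp_pos y, Real.exp_pos (x - y)]

private lemma mul_exp_neg_le (c t : ℝ) (hc : 0 < c) (ht : 0 ≤ t) :
    t * Real.exp (-(c * t)) ≤ 1 / c := by
  have h1 : c * t + 1 ≤ Real.exp (c * t) := by
    have := Real.add_one_le_exp (c * t); linarith
  have h2 : Real.exp (c * t) * Real.exp (-(c * t)) = 1 := by
    rw [← Real.exp_add]; simp
  have h3 := Real.exp_pos (-(c * t))
  have h4 : (c * t + 1) * Real.exp (-(c * t)) ≤ 1 := by
    nlinarith [mul_le_mul_of_nonneg_right h1 h3.le]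
  rw [le_div_iff₀ hc]
  nlinarith

/-- **Lemma.** Let `γ > 0`.  For each `n ∈ ℕ` and `j = 0,…,n` let
`a(n,j) ∈ (0,1)` and `b(n,j) > 0`, and suppose `log b(n,j) / log a(n,j) → γ` as
`n → ∞`, uniformly in `j`.  With `A_k(n) = ∏_{j=k}^n a(n,j)` and
`B_k(n) = ∏_{j=k}^n b(n,j)`, one has `A_k(n)^γ − B_k(n) → 0` as `n → ∞`,
uniformly in `k`. -/
theorem products_convergence_lemma
    (γ : ℝ) (hγ : 0 < γ) (a b : ℕ → ℕ → ℝ)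
    (ha : ∀ n, ∀ j ≤ n, a n j ∈ Set.Ioo (0 : ℝ) 1)
    (hb : ∀ n, ∀ j ≤ n, 0 < b n j)
    (hconv : ∀ ε > 0, ∃ n₀ : ℕ, ∀ n ≥ n₀, ∀ j ≤ n,
      |Real.log (b n j) / Real.log (a n j) - γ| < ε) :
    ∀ ε > 0, ∃ n₀ : ℕ, ∀ n ≥ n₀, ∀ k ≤ n,
      |(∏ j ∈ Finset.Icc k n, a n j) ^ γ - ∏ j ∈ Finset.Icc k n, b n j| < ε := by
  intro ε hε
  set ε' : ℝ := min (γ / 2) (ε * γ / 4) with hε'def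
  have hε'pos : 0 < ε' := lt_min (by linarith) (by positivity)
  have hε'le1 : ε' ≤ γ / 2 := min_le_left _ _
  have hε'le2 : ε' ≤ ε * γ / 4 := min_le_right _ _
  obtain ⟨n₀, hn₀⟩ := hconv ε' hε'pos
  refine ⟨n₀, fun n hn k hk => ?_⟩
  have hmem : ∀ j ∈ Finset.Icc k n, j ≤ n := fun j hj => (Finset.mem_Icc.1 hj).2
  set S := ∑ j ∈ Finset.Icc k n, Real.log (a n j) with hSdef
  set T := ∑ j ∈ Finset.Icc k n, Real.log (b n j) with hTdef
  have hloga_neg : ∀ j ∈ Finset.Icc k n, Real.log (a n j) < 0 := fun j hj =>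
    Real.log_neg (ha n j (hmem j hj)).1 (ha n j (hmem j hj)).2
  have hSle : S ≤ 0 := Finset.sum_nonpos fun j hj => (hloga_neg j hj).le
  have hA : (∏ j ∈ Finset.Icc k n, a n j) ^ γ = Real.exp (γ * S) := by
    rw [Real.rpow_def_of_pos (Finset.prod_pos fun j hj => (ha n j (hmem j hj)).1),
      Real.log_prod (s := Finset.Icc k n) (f := a n) (fun j hj => ne_of_gt (ha n j (hmem j hj)).1)]
    rw [hSdef]
    ring_nf
  have hB : (∏ j ∈ Finset.Icc k n, b n j) = Real.exp T := by
    rw [hTdef, Real.exp_sum]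
    exact Finset.prod_congr rfl fun j hj => (Real.exp_log (hb n j (hmem j hj))).symm
  have hTS : |T - γ * S| ≤ ε' * (-S) := by
    have heq : T - γ * S =
        ∑ j ∈ Finset.Icc k n, (Real.log (b n j) - γ * Real.log (a n j)) := by
      rw [Finset.sum_sub_distrib, Finset.mul_sum]
    rw [heq]
    calc |∑ j ∈ Finset.Icc k n, (Real.log (b n j) - γ * Real.log (a n j))|
        ≤ ∑ j ∈ Finset.Icc k n, |Real.log (b n j) - γ * Real.log (a n j)| :=
          Finset.abs_sum_le_sum_abs _ _
      _ ≤ ∑ j ∈ Finset.Icc k n, ε' * (-Real.log (a n j)) := by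
          refine Finset.sum_le_sum fun j hj => ?_
          have hne : Real.log (a n j) ≠ 0 := ne_of_lt (hloga_neg j hj)
          have : Real.log (b n j) - γ * Real.log (a n j) =
              (Real.log (b n j) / Real.log (a n j) - γ) * Real.log (a n j) := by
            field_simp
          rw [this, abs_mul, abs_of_neg (hloga_neg j hj)]
          exact mul_le_mul_of_nonneg_right (hn₀ n hn j (hmem j hj)).le
            (by linarith [hloga_neg j hj])
      _ = ε' * (-S) := by
          rw [← Finset.mul_sum, hSdef, ← Finset.sum_neg_distrib]
  have hmax : max (γ * S) T ≤ (γ / 2) * S := by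
    have habs := abs_le.1 hTS
    refine max_le ?_ ?_ <;> nlinarith [sq_nonneg S]
  have hkey : |Real.exp (γ * S) - Real.exp T| ≤ Real.exp ((γ / 2) * S) * (ε' * (-S)) := by
    calc |Real.exp (γ * S) - Real.exp T|
        ≤ Real.exp (max (γ * S) T) * |γ * S - T| := abs_exp_sub_exp_le _ _
      _ ≤ Real.exp ((γ / 2) * S) * (ε' * (-S)) := by
          refine mul_le_mul (Real.exp_le_exp.2 hmax) ?_ (abs_nonneg _) (Real.exp_pos _).le
          rw [abs_sub_comm]; exact hTS
  have hbound : Real.exp ((γ / 2) * S) * (ε' * (-S)) ≤ ε' * (2 / γ) := by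
    have ht : (0 : ℝ) ≤ -S := by linarith
    have := mul_exp_neg_le (γ / 2) (-S) (by linarith) ht
    have heq : (γ / 2) * S = -((γ / 2) * (-S)) := by ring
    rw [heq]
    have h2 : (-S) * Real.exp (-((γ / 2) * (-S))) ≤ 1 / (γ / 2) := this
    have h3 : 1 / (γ / 2) = 2 / γ := by field_simp
    nlinarith [Real.exp_pos (-((γ / 2) * (-S)))]
  have hfin : ε' * (2 / γ) ≤ ε / 2 := by
    have heq2 : (ε * γ / 4) * (2 / γ) = ε / 2 := by field_simp; ring
    have hmul := mul_le_mul_of_nonneg_right hε'le2 (le_of_lt (div_pos two_pos hγ))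
    linarith
  rw [hA, hB]
  calc |Real.exp (γ * S) - Real.exp T| ≤ ε' * (2 / γ) := le_trans hkey hbound
    _ ≤ ε / 2 := hfin
    _ < ε := by linarith
end

section
/- Let λ_j = λ_0 + jω for j = 0,…,n, where ω ≠ 0, and let p_{(λ_0,…,λ_n),k} be the explicit equidistant Bernstein basis for a ≠ b. Define t_k := a + (k/n)(b−a). Then the operator defined for f ∈ C[a,b] by B f(x) = Σ_{k=0}^{n} f(t_k) · (n!/(n−k)!) · (ω^k e^{−λ_0 (k/n)(b−a)} / (e^{ω(b−a)} − 1)^k) · p_{(λ_0,…,λ_n),k}(x) satisfies B(e^{λ_0 x}) = e^{λ_0 x} and B(e^{λ_n x}) = e^{λ_n x}. -/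
open Filter Topology Set

noncomputable section

lemma bern_eq (n : ℕ) (lam0 ω : ℂ) (a b x : ℝ)
    (hne : Complex.exp (ω * ((b : ℂ) - (a : ℂ))) ≠ 1) (k : ℕ) :
    equidistantBernstein n lam0 ω a b k x =
      Complex.exp (lam0 * ((x : ℂ) - a)) / ((k.factorial : ℂ) * ω ^ k) *
        (Complex.exp (ω * ((x : ℂ) - a)) - 1) ^ k *
        ((Complex.exp (ω * ((b : ℂ) - a)) - Complex.exp (ω * ((x : ℂ) - a))) /
          (Complex.exp (ω * ((b : ℂ) - a)) - 1)) ^ (n - k) := by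
  set E := Complex.exp (ω * ((b : ℂ) - a)) with hE
  have hE0 : E ≠ 0 := Complex.exp_ne_zero _
  have hE1 : E - 1 ≠ 0 := sub_ne_zero.mpr hne
  have hp : Complex.exp (ω * ((x : ℂ) - b)) = Complex.exp (ω * ((x : ℂ) - a)) / E := by
    rw [eq_div_iff hE0, ← Complex.exp_add]; congr 1; ring
  have hq : Complex.exp (ω * ((a : ℂ) - b)) = 1 / E := by
    rw [eq_div_iff hE0, ← Complex.exp_add, ← Complex.exp_zero]; congr 1; ring
  have hq1 : (1 : ℂ) - 1 / E ≠ 0 := by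
    intro h
    field_simp at h
    exact hE1 (by rw [h, mul_zero])
  unfold equidistantBernstein
  rw [hp, hq]
  congr 2
  field_simp

/-- **Proposition (Morigi–Neamtu operator).**  Let `λ_j = λ_0 + jω`, `j = 0,…,n`,
`ω ≠ 0`, with the explicit equidistant Bernstein basis `p_{n,k}` for `a ≠ b`, and
set `t_k = a + (k/n)(b−a)`.  Then the operator
`B f (x) = ∑_{k=0}^n f(t_k) (n!/(n−k)!) (ω^k e^{−λ_0 (k/n)(b−a)} /
(e^{ω(b−a)} − 1)^k) p_{n,k}(x)` satisfies `B e^{λ_0 x} = e^{λ_0 x}` and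
`B e^{λ_n x} = e^{λ_n x}`. -/
theorem equidistant_bernstein_operator_reproduces
    (n : ℕ) (hn : 0 < n) (lam0 ω : ℂ) (hω : ω ≠ 0) (a b : ℝ) (hab : a ≠ b)
    (hne : Complex.exp (ω * ((b : ℂ) - (a : ℂ))) ≠ 1)
    (t : ℕ → ℝ) (ht : ∀ k, t k = a + ((k : ℝ) / (n : ℝ)) * (b - a))
    (c : ℕ → ℂ)
    (hc : ∀ k, c k = ((n.factorial : ℂ) / ((n - k).factorial : ℂ)) *
      (ω ^ k * Complex.exp (-lam0 * ((((k : ℝ) / (n : ℝ)) * (b - a) : ℝ) : ℂ)) /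
        (Complex.exp (ω * ((b : ℂ) - (a : ℂ))) - 1) ^ k)) :
    (∀ x : ℝ, ∑ k ∈ Finset.range (n + 1),
        Complex.exp (lam0 * ((t k : ℝ) : ℂ)) * c k * equidistantBernstein n lam0 ω a b k x =
      Complex.exp (lam0 * (x : ℂ))) ∧
    (∀ x : ℝ, ∑ k ∈ Finset.range (n + 1),
        Complex.exp ((lam0 + (n : ℂ) * ω) * ((t k : ℝ) : ℂ)) * c k *
          equidistantBernstein n lam0 ω a b k x =
      Complex.exp ((lam0 + (n : ℂ) * ω) * (x : ℂ))) := by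
  have hnC : (n : ℂ) ≠ 0 := Nat.cast_ne_zero.mpr hn.ne'
  set E := Complex.exp (ω * ((b : ℂ) - a)) with hEdef
  have hE0 : E ≠ 0 := Complex.exp_ne_zero _
  have hE1 : E - 1 ≠ 0 := sub_ne_zero.mpr hne
  -- key per-term identity for claim 1
  have key : ∀ (x : ℝ), ∀ k ∈ Finset.range (n + 1),
      Complex.exp (lam0 * ((t k : ℝ) : ℂ)) * c k * equidistantBernstein n lam0 ω a b k x =
        Complex.exp (lam0 * x) *
          (((Complex.exp (ω * ((x : ℂ) - a)) - 1) / (E - 1)) ^ k *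
            ((E - Complex.exp (ω * ((x : ℂ) - a))) / (E - 1)) ^ (n - k) * (n.choose k : ℂ)) := by
    intro x k hk
    have hk' : k ≤ n := Nat.lt_succ_iff.mp (Finset.mem_range.mp hk)
    set X := Complex.exp (ω * ((x : ℂ) - a)) with hXdef
    rw [ht, hc, bern_eq n lam0 ω a b x hne k]
    have hkf : (k.factorial : ℂ) ≠ 0 := Nat.cast_ne_zero.mpr k.factorial_ne_zero
    have hnkf : ((n - k).factorial : ℂ) ≠ 0 := Nat.cast_ne_zero.mpr (n - k).factorial_ne_zero
    have hωk : ω ^ k ≠ 0 := pow_ne_zero _ hω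
    have hexp : Complex.exp (lam0 * (((a + ((k : ℝ) / (n : ℝ)) * (b - a) : ℝ)) : ℂ)) *
        Complex.exp (-lam0 * ((((k : ℝ) / (n : ℝ)) * (b - a) : ℝ) : ℂ)) *
        Complex.exp (lam0 * ((x : ℂ) - a)) = Complex.exp (lam0 * x) := by
      rw [← Complex.exp_add, ← Complex.exp_add]
      push_cast
      congr 1
      ring
    rw [← hexp, Nat.cast_choose ℂ hk', ← hEdef, ← hXdef, div_pow, div_pow]
    field_simp
  constructor
  · intro x
    rw [Finset.sum_congr rfl (key x), ← Finset.mul_sum, ← add_pow]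
    have huv : (Complex.exp (ω * ((x : ℂ) - a)) - 1) / (E - 1) +
        (E - Complex.exp (ω * ((x : ℂ) - a))) / (E - 1) = 1 := by
      field_simp
      ring
    rw [huv, one_pow, mul_one]
  · intro x
    set X := Complex.exp (ω * ((x : ℂ) - a)) with hXdef
    have key2 : ∀ k ∈ Finset.range (n + 1),
        Complex.exp ((lam0 + (n : ℂ) * ω) * ((t k : ℝ) : ℂ)) * c k *
          equidistantBernstein n lam0 ω a b k x =
        Complex.exp (lam0 * x) * Complex.exp ((n : ℂ) * ω * a) *
          ((E * ((X - 1) / (E - 1))) ^ k * ((E - X) / (E - 1)) ^ (n - k) * (n.choose k : ℂ)) := by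
      intro k hk
      have hsplit : Complex.exp ((lam0 + (n : ℂ) * ω) * ((t k : ℝ) : ℂ)) =
          Complex.exp (lam0 * ((t k : ℝ) : ℂ)) * (Complex.exp ((n : ℂ) * ω * a) * E ^ k) := by
        rw [hEdef, ← Complex.exp_nat_mul, ← Complex.exp_add, ← Complex.exp_add, ht]
        push_cast
        congr 1
        field_simp
      calc Complex.exp ((lam0 + (n : ℂ) * ω) * ((t k : ℝ) : ℂ)) * c k *
            equidistantBernstein n lam0 ω a b k x
          = (Complex.exp (lam0 * ((t k : ℝ) : ℂ)) * c k * equidistantBernstein n lam0 ω a b k x) *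
              (Complex.exp ((n : ℂ) * ω * a) * E ^ k) := by rw [hsplit]; ring
        _ = (Complex.exp (lam0 * x) *
              (((X - 1) / (E - 1)) ^ k * ((E - X) / (E - 1)) ^ (n - k) * (n.choose k : ℂ))) *
              (Complex.exp ((n : ℂ) * ω * a) * E ^ k) := by rw [key x k hk]
        _ = _ := by rw [mul_pow]; ring
    rw [Finset.sum_congr rfl key2, ← Finset.mul_sum, ← add_pow]
    have huv : E * ((X - 1) / (E - 1)) + (E - X) / (E - 1) = X := by
      field_simp
      ring
    rw [huv]
    rw [hXdef, ← Complex.exp_nat_mul, ← Complex.exp_add, ← Complex.exp_add]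
    congr 1
    ring
end
end
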